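/- arXiv:1601.04220 — 6 statements merged into one kernel-verified Lean document; each statement's English description precedes it below -/
import Mathlib

section
/- Let N be a gammoid and let F be an infinite field. Then N is representable over F. -/
/-!
Common definitions: digraphs, linkings, gammoids, minors, isomorphism.
-/

universe u v

open Set

/-- `X` is linked to `T` in the digraph on vertex type `V` with arc relation `A`:
there is a family of pairwise vertex-disjoint directed paths, one starting at each
vertex of `X`, each ending at a vertex of `T`. A path may be a single vertex. -/
def Linked {V : Type*} (A : V → V → Prop) (T X : Set V) : Prop :=
  ∃ P : V → List V,
    (∀ x ∈ X, (P x).head? = some x ∧ (P x).Nodup ∧ (P x).Chain' A ∧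
      ∃ t ∈ T, (P x).getLast? = some t) ∧
    ∀ x ∈ X, ∀ y ∈ X, x ≠ y → ∀ v, v ∈ (P x) → v ∉ (P y)

/-- `M` is the matroid `L(G,S,T)`: its ground set is `S`, and its independent sets
are exactly the subsets of `S` that are linked to `T`. -/
def IsLinkMatroid {V : Type*} (A : V → V → Prop) (S T : Set V) (M : Matroid V) : Prop :=
  M.E = S ∧ ∀ I : Set V, M.Indep I ↔ I ⊆ S ∧ Linked A T I

/-- A matroid is a gammoid if it is (isomorphic to) a matroid of the form `L(G,S,T)`:
there are a digraph on a vertex type `V`, a target set `T ⊆ V`, and an injection `e`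
of the ground set into `V` (whose image plays the role of `S`), such that a set is
independent if and only if its image is linked to `T`. -/
def IsGammoid {α : Type u} (M : Matroid α) : Prop :=
  ∃ (V : Type u) (A : V → V → Prop) (T : Set V) (e : α → V),
    Set.InjOn e M.E ∧ ∀ I, I ⊆ M.E → (M.Indep I ↔ Linked A T (e '' I))

/-- Deletion of a set from a matroid. -/
def Matroid.del {α : Type*} (M : Matroid α) (D : Set α) : Matroid α := M.restrict (M.E \ D)

/-- Contraction of a set from a matroid, defined by duality. -/
def Matroid.con {α : Type*} (M : Matroid α) (C : Set α) : Matroid α := (M✶.del C)✶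

/-- One step of taking a minor: a single deletion or a single contraction. -/
def MinorStep {α : Type*} (N M : Matroid α) : Prop :=
  (∃ D, N = M.del D) ∨ (∃ C, N = M.con C)

/-- `N` is a minor of `M` if it is obtained from `M` by a sequence of deletions
and contractions. -/
def IsMinor {α : Type*} (N M : Matroid α) : Prop :=
  Relation.ReflTransGen MinorStep N M

/-- Isomorphism of matroids: a bijection between the ground sets under which
independence is preserved and reflected. -/
def MatroidIso {α : Type u} {β : Type v} (M : Matroid α) (N : Matroid β) : Prop :=
  ∃ e : α → β, Set.BijOn e M.E N.E ∧ ∀ I, I ⊆ M.E → (M.Indep I ↔ N.Indep (e '' I))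

/-- An excluded minor for the class of gammoids: a matroid that is not a gammoid,
every proper minor of which is a gammoid. -/
def IsExcludedMinor {α : Type u} (M : Matroid α) : Prop :=
  ¬ IsGammoid M ∧ ∀ N : Matroid α, IsMinor N M → N ≠ M → IsGammoid N

/-- A circuit: a minimal dependent set. -/
def IsCircuit {α : Type*} (M : Matroid α) (C : Set α) : Prop :=
  C ⊆ M.E ∧ ¬ M.Indep C ∧ ∀ C' : Set α, C' ⊂ C → M.Indep C'

/-- A coloop: an element contained in every base. -/
def IsColoop {α : Type*} (M : Matroid α) (x : α) : Prop :=
  x ∈ M.E ∧ ∀ B, M.IsBase B → x ∈ B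

/-- `M` is representable over the field `F`: there is a map from the ground set to
a vector space over `F` under which a set is independent in `M` if and only if its
image is linearly independent (injectivity on independent sets being part of
linear independence of the indexed family). -/
def RepresentableOver (F : Type v) [Field F] {α : Type u} (M : Matroid α) : Prop :=
  ∃ (ι : Type (max u v)) (φ : α → (ι → F)),
    ∀ I, I ⊆ M.E → (M.Indep I ↔ LinearIndependent F (fun x : I => φ (x : α)))


namespace GammoidProof

open Matrix

section Paths
variable {V : Type u}

variable {V : Type u}

lemma mem_left_of_infix {l : List V} {u v : V} (h : [u, v] <:+: l) : u ∈ l :=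
  h.subset (by simp)

lemma mem_right_of_infix {l : List V} {u v : V} (h : [u, v] <:+: l) : v ∈ l :=
  h.subset (by simp)

lemma pair_prefix_iff {l : List V} {u v : V} :
    [u, v] <+: l ↔ ∃ r, l = u :: v :: r := by
  constructor
  · rintro ⟨r, hr⟩; exact ⟨r, hr.symm⟩
  · rintro ⟨r, rfl⟩; exact ⟨r, rfl⟩

lemma exists_infix_pair {l : List V} {u t : V} (hu : u ∈ l) (ht : l.getLast? = some t)
    (hne : u ≠ t) : ∃ v, [u, v] <:+: l := by
  induction l with
  | nil => simp at hu
  | cons a l ih =>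
    rcases List.mem_cons.1 hu with rfl | hu'
    · cases l with
      | nil => exact absurd (by simpa using ht) hne
      | cons b l' => exact ⟨b, ⟨[], l', by simp⟩⟩
    · have hl : l ≠ [] := List.ne_nil_of_mem hu'
      have ht' : l.getLast? = some t := by
        cases l with
        | nil => exact absurd rfl hl
        | cons b l' => rw [List.getLast?_cons_cons] at ht; exact ht
      obtain ⟨v, hv⟩ := ih hu' ht'
      exact ⟨v, hv.trans (List.infix_cons (List.infix_refl l))⟩

lemma not_infix_head {l : List V} (hn : l.Nodup) {w v : V} (hh : l.head? = some v)
    (h : [w, v] <:+: l) : False := by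
  cases l with
  | nil => simp at hh
  | cons a r =>
    have hav : a = v := by simpa using hh
    subst hav
    have hvr : a ∉ r := (List.nodup_cons.1 hn).1
    rcases List.infix_cons_iff.1 h with hp | hi
    · obtain ⟨r1, hr1⟩ := pair_prefix_iff.1 hp
      obtain ⟨rfl, hr⟩ := List.cons.inj hr1
      exact hvr (hr ▸ List.mem_cons_self)
    · exact hvr (mem_right_of_infix hi)

lemma pred_unique {l : List V} (hn : l.Nodup) {u w v : V}
    (h1 : [u, v] <:+: l) (h2 : [w, v] <:+: l) : u = w := by
  induction l with
  | nil => exact absurd (List.eq_nil_of_infix_nil h1) (by simp)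
  | cons a l ih =>
    rcases List.infix_cons_iff.1 h1 with hp1 | hi1 <;>
      rcases List.infix_cons_iff.1 h2 with hp2 | hi2
    · obtain ⟨r1, hr1⟩ := pair_prefix_iff.1 hp1
      obtain ⟨r2, hr2⟩ := pair_prefix_iff.1 hp2
      rw [hr1] at hr2
      exact (List.cons.inj hr2).1
    · obtain ⟨r1, hr1⟩ := pair_prefix_iff.1 hp1
      obtain ⟨rfl, rfl⟩ := List.cons.inj hr1
      exact absurd (not_infix_head hn.of_cons rfl hi2) not_false
    · obtain ⟨r2, hr2⟩ := pair_prefix_iff.1 hp2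
      obtain ⟨rfl, rfl⟩ := List.cons.inj hr2
      exact absurd (not_infix_head hn.of_cons rfl hi1) not_false
    · exact ih hn.of_cons hi1 hi2

lemma succ_not_self {l : List V} (hn : l.Nodup) {u : V} (h : [u, u] <:+: l) : False := by
  have := h.sublist.nodup hn
  simp at this

lemma rel_of_infix_pair {A : V → V → Prop} {l : List V} (hc : l.Chain' A) {u v : V}
    (h : [u, v] <:+: l) : A u v :=
  List.isChain_pair.1 (hc.infix h)

/-- Forward direction of the core combinatorial lemma: a linkage yields an
injective "matching" from the complement of `T` avoiding `X`. -/
theorem linked_to_matching {A : V → V → Prop} {T X : Set V} (h : Linked A T X) :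
    ∃ g : {v : V // v ∉ T} → V, Function.Injective g ∧ (∀ u, g u ∉ X) ∧
      ∀ u, g u = (u : V) ∨ A (u : V) (g u) := by
  obtain ⟨P, hP, hdisj⟩ := h
  -- for each u ∉ T, choose a successor
  have key : ∀ u : {v : V // v ∉ T}, ∃ v : V,
      (¬ (∃ x ∈ X, (u : V) ∈ P x) → v = (u : V)) ∧
      (∀ x ∈ X, (u : V) ∈ P x → [(u : V), v] <:+: P x) := by
    intro u
    by_cases hex : ∃ x ∈ X, (u : V) ∈ P x
    · obtain ⟨x, hx, hu⟩ := hex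
      obtain ⟨-, -, -, t, ht, hlast⟩ := hP x hx
      have hne : (u : V) ≠ t := fun he => u.2 (he ▸ ht)
      obtain ⟨v, hv⟩ := exists_infix_pair hu hlast hne
      refine ⟨v, fun hc => absurd ⟨x, hx, hu⟩ hc, fun y hy huy => ?_⟩
      obtain rfl : y = x := by
        by_contra hne'
        exact hdisj y hy x hx hne' _ huy hu
      exact hv
    · exact ⟨u, fun _ => rfl, fun x hx hu => absurd ⟨x, hx, hu⟩ hex⟩
  choose g hg1 hg2 using key
  have hmemP : ∀ x ∈ X, x ∈ P x := by
    intro x hx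
    have := (hP x hx).1
    exact List.mem_of_mem_head? (this ▸ rfl)
  refine ⟨g, ?_, ?_, ?_⟩
  · -- injective
    intro u u' heq
    by_cases he : ∃ x ∈ X, (u : V) ∈ P x <;> by_cases he' : ∃ x ∈ X, (u' : V) ∈ P x
    · obtain ⟨x, hx, hu⟩ := he
      obtain ⟨x', hx', hu'⟩ := he'
      have i1 := hg2 u x hx hu
      have i2 := hg2 u' x' hx' hu'
      rw [heq] at i1
      -- g u' is in both P x and P x'
      have hv1 : g u' ∈ P x := mem_right_of_infix i1
      have hv2 : g u' ∈ P x' := mem_right_of_infix i2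
      obtain rfl : x = x' := by
        by_contra hne'
        exact hdisj x hx x' hx' hne' _ hv1 hv2
      exact Subtype.ext (pred_unique (hP x hx).2.1 i1 i2)
    · rw [hg1 u' he'] at heq
      obtain ⟨x, hx, hu⟩ := he
      have i1 := hg2 u x hx hu
      rw [heq] at i1
      exact absurd ⟨x, hx, mem_right_of_infix i1⟩ he'
    · rw [hg1 u he] at heq
      obtain ⟨x, hx, hu⟩ := he'
      have i2 := hg2 u' x hx hu
      rw [← heq] at i2
      exact absurd ⟨x, hx, mem_right_of_infix i2⟩ he
    · exact Subtype.ext ((hg1 u he).symm.trans (heq.trans (hg1 u' he')))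
  · -- avoids X
    intro u hu
    by_cases he : ∃ x ∈ X, (u : V) ∈ P x
    · obtain ⟨x, hx, hmem⟩ := he
      have i1 := hg2 u x hx hmem
      have hin : g u ∈ P (g u) := hmemP _ hu
      have hin' : g u ∈ P x := mem_right_of_infix i1
      obtain rfl : g u = x := by
        by_contra hne'
        exact hdisj (g u) hu x hx hne' _ hin hin'
      exact not_infix_head (hP _ hx).2.1 (hP _ hx).1 i1
    · have := hg1 u he
      rw [this] at hu
      exact he ⟨u, hu, hmemP _ hu⟩
  · -- adjacency
    intro u
    by_cases he : ∃ x ∈ X, (u : V) ∈ P x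
    · obtain ⟨x, hx, hu⟩ := he
      exact Or.inr (rel_of_infix_pair (hP x hx).2.2.1 (hg2 u x hx hu))
    · exact Or.inl (hg1 u he)


end Paths

section Backward

variable {V : Type u}

section Backward
variable [Fintype V] {A : V → V → Prop} {T X : Set V}

/-- Backward direction: an injective matching avoiding `X` yields a linkage. -/
theorem matching_to_linked (g : {v : V // v ∉ T} → V) (hinj : Function.Injective g)
    (hX : ∀ u, g u ∉ X) (hadj : ∀ u, g u = (u : V) ∨ A (u : V) (g u)) :
    Linked A T X := by
  classical
  -- total step function
  set f : V → V := fun v => if h : v ∉ T then g ⟨v, h⟩ else v with hf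
  have hfinj : ∀ v w, v ∉ T → w ∉ T → f v = f w → v = w := by
    intro v w hv hw he
    simp only [hf, dif_pos hv, dif_pos hw] at he
    exact Subtype.ext_iff.1 (hinj he)
  have hfX : ∀ v, v ∉ T → f v ∉ X := by
    intro v hv; simp only [hf, dif_pos hv]; exact hX _
  have hfrange : ∀ v, v ∉ T → ∀ x ∈ X, f v ≠ x := fun v hv x hx he => hfX v hv (he ▸ hx)
  -- distinctness of iterates
  have B1 : ∀ (i : ℕ) (j : ℕ) (x y : V), x ∈ X → y ∈ X →
      (∀ k < i, f^[k] x ∉ T) → (∀ k < j, f^[k] y ∉ T) →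
      f^[i] x = f^[j] y → x = y ∧ i = j := by
    intro i
    induction i with
    | zero =>
      intro j x y hx hy _ hjT he
      cases j with
      | zero => exact ⟨by simpa using he, rfl⟩
      | succ j =>
        exfalso
        rw [Function.iterate_succ_apply'] at he
        exact hfrange _ (hjT j (Nat.lt_succ_self j)) x hx he.symm
    | succ i ih =>
      intro j x y hx hy hiT hjT he
      cases j with
      | zero =>
        exfalso
        rw [Function.iterate_succ_apply'] at he
        exact hfrange _ (hiT i (Nat.lt_succ_self i)) y hy he
      | succ j =>
        rw [Function.iterate_succ_apply', Function.iterate_succ_apply'] at he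
        have h1 : f^[i] x ∉ T := hiT i (Nat.lt_succ_self i)
        have h2 : f^[j] y ∉ T := hjT j (Nat.lt_succ_self j)
        obtain ⟨hxy, hij⟩ := ih j x y hx hy (fun k hk => hiT k (hk.trans (Nat.lt_succ_self i)))
          (fun k hk => hjT k (hk.trans (Nat.lt_succ_self j))) (hfinj _ _ h1 h2 he)
        exact ⟨hxy, by omega⟩
  -- hitting time exists
  have hit : ∀ x ∈ X, ∃ n, f^[n] x ∈ T := by
    intro x hx
    by_contra hc
    push_neg at hc
    have hinj' : Function.Injective (fun k : Fin (Fintype.card V + 1) => f^[(k : ℕ)] x) := by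
      intro k k' he
      have := B1 k k' x x hx hx (fun i _ => hc i) (fun i _ => hc i) he
      exact Fin.ext this.2
    have := Fintype.card_le_of_injective _ hinj'
    simp at this
  -- define hitting times and paths
  set n : ∀ x, x ∈ X → ℕ := fun x hx => Nat.find (hit x hx) with hn
  have hnT : ∀ x (hx : x ∈ X), f^[n x hx] x ∈ T := fun x hx => Nat.find_spec (hit x hx)
  have hnlt : ∀ x (hx : x ∈ X), ∀ k < n x hx, f^[k] x ∉ T :=
    fun x hx k hk => Nat.find_min (hit x hx) hk
  set P : V → List V := fun x =>
    if hx : x ∈ X then (List.range (n x hx + 1)).map (fun k => f^[k] x) else [] with hP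
  have hPmem : ∀ x (hx : x ∈ X) (v : V), v ∈ P x ↔ ∃ k ≤ n x hx, f^[k] x = v := by
    intro x hx v
    simp only [hP, dif_pos hx, List.mem_map, List.mem_range, Nat.lt_succ_iff]
    all_goals tauto
  refine ⟨P, ?_, ?_⟩
  · intro x hx
    have hPx : P x = (List.range (n x hx + 1)).map (fun k => f^[k] x) := by
      simp only [hP, dif_pos hx]
    refine ⟨?_, ?_, ?_, ?_⟩
    · rw [hPx, List.range_succ_eq_map]
      simp
    · rw [hPx]
      refine List.Nodup.map_on ?_ List.nodup_range
      intro k hk k' hk' he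
      rw [List.mem_range, Nat.lt_succ_iff] at hk hk'
      exact (B1 k k' x x hx hx
        (fun i hi => hnlt x hx i (lt_of_lt_of_le hi hk))
        (fun i hi => hnlt x hx i (lt_of_lt_of_le hi hk')) he).2
    · rw [hPx]
      change List.IsChain A _
      rw [List.isChain_map]
      rw [List.isChain_range_succ]
      intro i hi
      have hiT : f^[i] x ∉ T := hnlt x hx i hi
      rw [Function.iterate_succ_apply']
      have : f (f^[i] x) = g ⟨f^[i] x, hiT⟩ := by
        show (if h : f^[i] x ∉ T then g ⟨f^[i] x, h⟩ else f^[i] x) = _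
        rw [dif_pos hiT]
      rcases hadj ⟨f^[i] x, hiT⟩ with heq | harc
      · -- fixed point: contradiction with distinctness
        exfalso
        have he2 : f^[i+1] x = f^[i] x := by
          rw [Function.iterate_succ_apply', this, heq]
        have := (B1 (i+1) i x x hx hx
          (fun k hk => hnlt x hx k (by omega))
          (fun k hk => hnlt x hx k (by omega)) he2).2
        omega
      · rw [this]; exact harc
    · refine ⟨f^[n x hx] x, hnT x hx, ?_⟩
      rw [hPx, List.range_succ, List.map_append]
      simp
  · intro x hx y hy hxy v hvx hvy
    rw [hPmem x hx] at hvx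
    rw [hPmem y hy] at hvy
    obtain ⟨i, hi, rfl⟩ := hvx
    obtain ⟨j, hj, he⟩ := hvy
    exact hxy (B1 i j x y hx hy
      (fun k hk => hnlt x hx k (lt_of_lt_of_le hk hi))
      (fun k hk => hnlt y hy k (lt_of_lt_of_le hk hj)) he.symm).1

end Backward

end Backward

section LinAlg
variable {V₀ : Type u} [Fintype V₀] [DecidableEq V₀] {F : Type v} [Field F]



lemma matching_of_det_ne_zero {R : Type u} [Fintype R] [DecidableEq R]
    (E : R → V₀ → Prop) (B : Matrix R V₀ F) (hsupp : ∀ u v, ¬ E u v → B u v = 0)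
    (c : R → V₀) (hdet : (B.submatrix id c).det ≠ 0) :
    ∃ σ : Equiv.Perm R, ∀ u, E u (c (σ u)) := by
  by_contra hno
  push_neg at hno
  apply hdet
  rw [Matrix.det_apply]
  refine Finset.sum_eq_zero fun σ _ => ?_
  obtain ⟨u, hu⟩ := hno σ⁻¹
  have h0 : (∏ i : R, B.submatrix id c (σ i) i) = 0 :=
    Finset.prod_eq_zero (Finset.mem_univ (σ⁻¹ u)) (by
      simp only [Matrix.submatrix_apply, id_eq, Equiv.Perm.inv_def, Equiv.apply_symm_apply]
      exact hsupp _ _ hu)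
  rw [h0, smul_zero]

set_option maxHeartbeats 1600000 in
theorem li_of_matching {R : Type u} [Fintype R] [DecidableEq R]
    (B₀ : Matrix R V₀ F) (X : Set V₀) (g : R → V₀)
    (hgX : ∀ u, g u ∉ X)
    (hdet : IsUnit (B₀.submatrix id g)) :
    LinearIndependent F fun x : X =>
      (LinearMap.range B₀.vecMulLinear).mkQ (Pi.single (x : V₀) 1) := by
  classical
  rw [Fintype.linearIndependent_iff]
  intro gc hgc x
  set Row := LinearMap.range B₀.vecMulLinear with hRow
  set c : V₀ → F := ∑ x' : X, gc x' • (Pi.single (x' : V₀) (1 : F) : V₀ → F) with hc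
  have hmkc : Row.mkQ c = 0 := by
    rw [hc, map_sum]
    simp only [_root_.map_smul]
    exact hgc
  have hcRow : c ∈ Row := by rwa [← Submodule.Quotient.mk_eq_zero, ← Submodule.mkQ_apply]
  obtain ⟨y, hy⟩ := hcRow
  have hzero : y ᵥ* B₀ = c := by rw [← Matrix.vecMulLinear_apply]; exact hy
  have hcg : ∀ u : R, c (g u) = 0 := by
    intro u
    rw [hc, Finset.sum_apply]
    refine Finset.sum_eq_zero fun x' _ => ?_
    have hne : g u ≠ (x' : V₀) := fun he => hgX u (he ▸ x'.2)
    simp only [Pi.smul_apply, Pi.single_apply, if_neg hne, smul_zero]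
  have hyMsub : y ᵥ* (B₀.submatrix id g) = 0 := by
    funext u
    have he : (y ᵥ* (B₀.submatrix id g)) u = (y ᵥ* B₀) (g u) := by
      simp [Matrix.vecMul, dotProduct]
    rw [he, hzero]
    simp only [Pi.zero_apply]
    exact hcg u
  have hy0 : y = 0 := by
    apply Matrix.vecMul_injective_iff_isUnit.2 hdet
    show y ᵥ* (B₀.submatrix id g) = 0 ᵥ* (B₀.submatrix id g)
    rw [hyMsub, Matrix.zero_vecMul]
  have hc0 : c = 0 := by rw [← hzero, hy0, Matrix.zero_vecMul]
  have hx := congrFun hc0 (x : V₀)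
  rw [hc, Finset.sum_apply] at hx
  have hother : ∀ x' ∈ Finset.univ, x' ≠ x →
      (gc x' • (Pi.single (x' : V₀) (1 : F) : V₀ → F)) (x : V₀) = 0 := by
    intro x' _ hne
    have : (x : V₀) ≠ (x' : V₀) := fun he => hne (Subtype.ext he.symm)
    simp only [Pi.smul_apply, Pi.single_apply, if_neg this, smul_zero]
  rw [Finset.sum_eq_single_of_mem x (Finset.mem_univ x) hother] at hx
  simpa using hx





set_option maxHeartbeats 1600000 in
theorem dep_of_no_matching {R : Type u} [Fintype R] [DecidableEq R]
    (E : R → V₀ → Prop) (B₀ : Matrix R V₀ F)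
    (hsupp : ∀ u v, ¬ E u v → B₀ u v = 0)
    (hrows : ∀ y : R → F, y ᵥ* B₀ = 0 → y = 0)
    (X : Set V₀)
    (hno : ¬ ∃ g : R → V₀, Function.Injective g ∧ (∀ u, g u ∉ X) ∧ ∀ u, E u (g u)) :
    ¬ LinearIndependent F fun x : X =>
      (LinearMap.range B₀.vecMulLinear).mkQ (Pi.single (x : V₀) 1) := by
  classical
  intro hLI
  set Row := LinearMap.range B₀.vecMulLinear with hRow
  set M : Matrix R {v : V₀ // v ∉ X} F := B₀.submatrix id (fun w => (w : V₀)) with hM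
  -- Step 1: the rows of M are linearly independent
  have hMrows : LinearIndependent F (fun i => M i) := by
    change LinearIndependent F M.row
    rw [← Matrix.vecMul_injective_iff]
    have hker : ∀ y : R → F, y ᵥ* M = 0 → y = 0 := by
      intro y hyM
      set cvec : V₀ → F := y ᵥ* B₀ with hcvec
      have hcompl : ∀ w : V₀, w ∉ X → cvec w = 0 := by
        intro w hw
        have h1 : (y ᵥ* M) ⟨w, hw⟩ = cvec w := by
          simp [hM, Matrix.vecMul, dotProduct, hcvec]
        rw [← h1, hyM]
        rfl
      have hdecomp : cvec = ∑ x : X, cvec (x : V₀) • (Pi.single (x : V₀) (1 : F) : V₀ → F) := by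
        funext v
        rw [Finset.sum_apply]
        by_cases hv : v ∈ X
        · rw [Finset.sum_eq_single_of_mem (⟨v, hv⟩ : X) (Finset.mem_univ _)]
          · simp
          · intro x' _ hne
            have hvne : v ≠ (x' : V₀) := fun he => hne (Subtype.ext he.symm)
            simp [Pi.single_apply, if_neg hvne]
        · rw [hcompl v hv]
          symm
          refine Finset.sum_eq_zero fun x' _ => ?_
          have hvne : v ≠ (x' : V₀) := fun he => hv (he ▸ x'.2)
          simp [Pi.single_apply, if_neg hvne]
      have hmem : cvec ∈ Row := ⟨y, by simp [hcvec]⟩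
      have hmk : Row.mkQ cvec = 0 := (Submodule.Quotient.mk_eq_zero _).2 hmem
      have hsum : ∑ x : X, cvec (x : V₀) • Row.mkQ (Pi.single (x : V₀) (1 : F) : V₀ → F) = 0 := by
        have h2 : Row.mkQ (∑ x : X, cvec (x : V₀) • (Pi.single (x : V₀) (1 : F) : V₀ → F)) = 0 := by
          rw [← hdecomp]; exact hmk
        rw [map_sum] at h2
        simpa only [_root_.map_smul] using h2
      have hcoef := Fintype.linearIndependent_iff.1 hLI (fun x => cvec (x : V₀)) hsum
      have hcvec0 : cvec = 0 := by
        funext v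
        by_cases hv : v ∈ X
        · exact hcoef ⟨v, hv⟩
        · exact hcompl v hv
      exact hrows y hcvec0
    intro y1 y2 h
    have h2 : (y1 - y2) ᵥ* M = 0 := by rw [Matrix.sub_vecMul]; rw [show y1 ᵥ* M = y2 ᵥ* M from h]; exact sub_self _
    exact sub_eq_zero.1 (hker _ h2)
  -- Step 2: the span of the columns of M is everything
  have hrank : M.rank = Fintype.card R := hMrows.rank_matrix
  have hspan : Submodule.span F (Set.range Mᵀ) = ⊤ := by
    apply Submodule.eq_top_of_finrank_eq
    have h1 : Module.finrank F (Submodule.span F (Set.range Mᵀ)) = M.rank := by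
      rw [Matrix.rank, Matrix.range_mulVecLin]; rfl
    rw [h1, hrank, Module.finrank_pi]
  -- Step 3: extract linearly independent columns
  obtain ⟨t, hsub, hspan', hLIt⟩ := exists_linearIndependent F (Set.range Mᵀ)
  rw [hspan] at hspan'
  haveI : Fintype t := ((Set.finite_range Mᵀ).subset hsub).fintype
  have hcard : Fintype.card t = Fintype.card R := by
    have h1 := finrank_span_set_eq_card hLIt
    rw [hspan', finrank_top, Module.finrank_pi] at h1
    rw [← Set.toFinset_card, h1]
  have hchoice : ∀ v : t, ∃ j, Mᵀ j = (v : R → F) := fun v => hsub v.2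
  choose jf hjf using hchoice
  have hjfinj : Function.Injective jf := by
    intro v v' he
    apply Subtype.ext
    rw [← hjf v, ← hjf v', he]
  set eqv := (Fintype.equivOfCardEq hcard.symm : R ≃ t) with heqv
  set cfun : R → {v : V₀ // v ∉ X} := fun r => jf (eqv r) with hcfun
  have hcinj : Function.Injective cfun := hjfinj.comp eqv.injective
  -- Step 4: the square submatrix is a unit
  have hcols : (fun i => (M.submatrix id cfun)ᵀ i) = (fun v : t => (v : R → F)) ∘ eqv := by
    funext i
    show (M.submatrix id cfun)ᵀ i = ((eqv i : t) : R → F)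
    rw [← hjf (eqv i)]
    funext r
    simp [hcfun, Matrix.submatrix_apply, Matrix.transpose_apply]
  have hUnit : IsUnit (M.submatrix id cfun) := by
    rw [← Matrix.linearIndependent_cols_iff_isUnit]
    change LinearIndependent F (fun i => (M.submatrix id cfun)ᵀ i)
    rw [hcols]
    exact hLIt.comp eqv eqv.injective
  have hdet : ((B₀.submatrix id (fun r => ((cfun r : V₀)))).det) ≠ 0 := by
    have hMB : M.submatrix id cfun = B₀.submatrix id (fun r => ((cfun r : V₀))) := by
      rw [hM, Matrix.submatrix_submatrix]
      rfl
    rw [← hMB]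
    exact (Matrix.isUnit_iff_isUnit_det _).1 hUnit |>.ne_zero
  obtain ⟨σ, hσ⟩ := matching_of_det_ne_zero E B₀ hsupp _ hdet
  exact hno ⟨fun u => ((cfun (σ u) : V₀)),
    Subtype.val_injective.comp (hcinj.comp σ.injective),
    fun u => (cfun (σ u)).2, hσ⟩





theorem exists_generic_matrix [Fintype V₀] [DecidableEq V₀] [Infinite F]
    {R : Type u} [Fintype R] [DecidableEq R] (E : R → V₀ → Prop)
    {ι : Type*} [Fintype ι] (g : ι → R → V₀) (hadj : ∀ i u, E u (g i u))
    (hinj : ∀ i, Function.Injective (g i)) :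
    ∃ B₀ : Matrix R V₀ F, (∀ u v, ¬ E u v → B₀ u v = 0) ∧
      ∀ i, IsUnit (B₀.submatrix id (g i)) := by
  classical
  set Bp : Matrix R V₀ (MvPolynomial (R × V₀) F) :=
    Matrix.of fun u v => if E u v then MvPolynomial.X (u, v) else 0 with hBp
  have hdets : ∀ i, ((Bp.submatrix id (g i)).det) ≠ 0 := by
    intro i
    set ξ : R × V₀ → F := fun p => if p.2 = g i p.1 then 1 else 0 with hξ
    have hmap : (Bp.submatrix id (g i)).map (MvPolynomial.eval ξ) = (1 : Matrix R R F) := by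
      funext u u'
      simp only [Matrix.map_apply, Matrix.submatrix_apply, id_eq, hBp, Matrix.of_apply]
      by_cases he : u' = u
      · subst he
        rw [if_pos (hadj i u')]
        simp [hξ]
      · by_cases hE : E u (g i u')
        · rw [if_pos hE]
          have : g i u' ≠ g i u := fun hc => he (hinj i hc)
          simp [hξ, MvPolynomial.eval_X, if_neg this, Matrix.one_apply_ne' ?_]
          · simp [Matrix.one_apply, if_neg (Ne.symm he)]
        · rw [if_neg hE]
          simp [Matrix.one_apply, if_neg (Ne.symm he)]
    intro h0
    have h2 := (MvPolynomial.eval ξ).map_det (Bp.submatrix id (g i))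
    rw [RingHom.mapMatrix_apply, hmap, h0] at h2
    simp at h2
  set p : MvPolynomial (R × V₀) F := ∏ i : ι, (Bp.submatrix id (g i)).det with hp
  have hpne : p ≠ 0 := Finset.prod_ne_zero_iff.2 fun i _ => hdets i
  have hev : ∃ ξ : R × V₀ → F, MvPolynomial.eval ξ p ≠ 0 := by
    by_contra hc
    push_neg at hc
    exact hpne (MvPolynomial.funext fun ξ => by rw [hc ξ, map_zero])
  obtain ⟨ξ, hξp⟩ := hev
  refine ⟨Bp.map (MvPolynomial.eval ξ), ?_, ?_⟩
  · intro u v hE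
    simp [hBp, Matrix.map_apply, if_neg hE]
  · intro i
    rw [Matrix.isUnit_iff_isUnit_det, isUnit_iff_ne_zero, Matrix.submatrix_map,
      ← RingHom.mapMatrix_apply, ← RingHom.map_det]
    rw [hp, map_prod] at hξp
    intro h0
    exact hξp (Finset.prod_eq_zero (Finset.mem_univ i) h0)


end LinAlg

section FiniteRep
/-- Representation of the linkage structure on a finite digraph. -/
theorem finite_rep {V₀ : Type u} [Fintype V₀] {F : Type v} [Field F] [Infinite F]
    (A₀ : V₀ → V₀ → Prop) (T₀ : Set V₀) :
    ∃ (n : ℕ) (φ : V₀ → (Fin n → F)), ∀ X : Set V₀,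
      Linked A₀ T₀ X ↔ LinearIndependent F fun x : X => φ (x : V₀) := by
  classical
  set R := {v : V₀ // v ∉ T₀} with hR
  set E : R → V₀ → Prop := fun u v => v = (u : V₀) ∨ A₀ (u : V₀) v with hE
  set S := {X : Set V₀ // Linked A₀ T₀ X} with hS
  have hch : ∀ s : S, ∃ g : R → V₀, Function.Injective g ∧ (∀ u, g u ∉ s.1) ∧
      ∀ u, E u (g u) := by
    intro s
    obtain ⟨g, h1, h2, h3⟩ := linked_to_matching s.2
    exact ⟨g, h1, h2, fun u => h3 u⟩
  choose gch hginj hgX hgadj using hch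
  set gfam : Option S → R → V₀ := fun i => i.elim (fun u => (u : V₀)) gch with hgfam
  have hadj : ∀ i u, E u (gfam i u) := by
    rintro (_ | s) u
    · exact Or.inl rfl
    · exact hgadj s u
  have hinj : ∀ i, Function.Injective (gfam i) := by
    rintro (_ | s)
    · exact Subtype.val_injective
    · exact hginj s
  obtain ⟨B₀, hsupp, hunit⟩ := exists_generic_matrix (F := F) E gfam hadj hinj
  have hrows : ∀ y : R → F, y ᵥ* B₀ = 0 → y = 0 := by
    intro y hy
    apply Matrix.vecMul_injective_iff_isUnit.2 (hunit none)
    show y ᵥ* (B₀.submatrix id (gfam none)) = 0 ᵥ* (B₀.submatrix id (gfam none))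
    rw [Matrix.zero_vecMul]
    funext u
    have h1 : (y ᵥ* (B₀.submatrix id (gfam none))) u = (y ᵥ* B₀) (gfam none u) := by
      simp [Matrix.vecMul, dotProduct]
    rw [h1, hy]
    rfl
  set Row := LinearMap.range B₀.vecMulLinear with hRow
  have hQfin : FiniteDimensional F ((V₀ → F) ⧸ Row) := inferInstance
  set n := Module.finrank F ((V₀ → F) ⧸ Row) with hn
  set b : Module.Basis (Fin n) F ((V₀ → F) ⧸ Row) := Module.finBasis F _ with hb
  refine ⟨n, fun v => b.equivFun (Row.mkQ (Pi.single v 1)), fun X => ?_⟩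
  have hiff : (LinearIndependent F fun x : X => b.equivFun (Row.mkQ (Pi.single (x : V₀) 1)))
      ↔ LinearIndependent F fun x : X => Row.mkQ (Pi.single (x : V₀) 1) := by
    exact LinearMap.linearIndependent_iff b.equivFun.toLinearMap b.equivFun.ker
  constructor
  · intro hX
    rw [hiff]
    exact li_of_matching B₀ X (gch ⟨X, hX⟩) (hgX ⟨X, hX⟩) (hunit (some ⟨X, hX⟩))
  · intro hLI
    by_contra hX
    have hno : ¬ ∃ g : R → V₀, Function.Injective g ∧ (∀ u, g u ∉ X) ∧ ∀ u, E u (g u) := by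
      rintro ⟨g, h1, h2, h3⟩
      exact hX (matching_to_linked g h1 h2 (fun u => h3 u))
    exact dep_of_no_matching E B₀ hsupp hrows X hno (hiff.1 hLI)


end FiniteRep

section Main
variable {V : Type u} {W : Set V} {A : V → V → Prop} {T : Set V}

lemma linked_of_linked_subtype {X₀ : Set ↥W}
    (h : Linked (fun u v : ↥W => A (u : V) (v : V)) {v : ↥W | (v : V) ∈ T} X₀) :
    Linked A T (Subtype.val '' X₀) := by
  classical
  obtain ⟨P₀, hP₀, hd₀⟩ := h
  refine ⟨fun v => if h : v ∈ W then (P₀ ⟨v, h⟩).map Subtype.val else [], ?_, ?_⟩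
  · rintro x ⟨x₀, hx₀, rfl⟩
    obtain ⟨hhead, hnodup, hchain, t₀, ht₀, hlast⟩ := hP₀ x₀ hx₀
    simp only [dif_pos x₀.2, Subtype.coe_eta]
    refine ⟨?_, hnodup.map Subtype.val_injective, (List.isChain_map _).2 hchain,
      (t₀ : V), ht₀, ?_⟩
    · rw [List.head?_map, hhead]; rfl
    · rw [List.getLast?_map, hlast]; rfl
  · rintro x ⟨x₀, hx₀, rfl⟩ y ⟨y₀, hy₀, rfl⟩ hxy v hvx hvy
    have hne : x₀ ≠ y₀ := fun he => hxy (congrArg _ he)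
    simp only [dif_pos x₀.2, Subtype.coe_eta] at hvx
    simp only [dif_pos y₀.2, Subtype.coe_eta] at hvy
    obtain ⟨v₀, hv₀, rfl⟩ := List.mem_map.1 hvx
    obtain ⟨v₁, hv₁, hv₁e⟩ := List.mem_map.1 hvy
    have hv10 : v₁ = v₀ := Subtype.val_injective hv₁e
    exact hd₀ x₀ hx₀ y₀ hy₀ hne v₀ hv₀ (hv10 ▸ hv₁)

lemma linked_subtype_of_linked {X₀ : Set ↥W} (P : V → List V)
    (hP : ∀ x₀ ∈ X₀, (P (x₀ : V)).head? = some (x₀ : V) ∧ (P (x₀ : V)).Nodup ∧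
      (P (x₀ : V)).Chain' A ∧ ∃ t ∈ T, (P (x₀ : V)).getLast? = some t)
    (hd : ∀ x₀ ∈ X₀, ∀ y₀ ∈ X₀, x₀ ≠ y₀ → ∀ w, w ∈ P (x₀ : V) → w ∉ P (y₀ : V))
    (hmem : ∀ x₀ ∈ X₀, ∀ w ∈ P (x₀ : V), w ∈ W) :
    Linked (fun u v : ↥W => A (u : V) (v : V)) {v : ↥W | (v : V) ∈ T} X₀ := by
  classical
  set P₀ : ↥W → List ↥W := fun u =>
    if h : ∀ w ∈ P (u : V), w ∈ W then (P (u : V)).attachWith (· ∈ W) h else [] with hP₀def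
  have hcoe : ∀ x₀ ∈ X₀, (P₀ x₀).map Subtype.val = P (x₀ : V) := by
    intro x₀ hx₀
    rw [hP₀def]
    simp only [dif_pos (hmem x₀ hx₀)]
    exact List.attachWith_map_subtype_val _
  refine ⟨P₀, ?_, ?_⟩
  · intro x₀ hx₀
    obtain ⟨hhead, hnodup, hchain, t, ht, hlast⟩ := hP x₀ hx₀
    rw [← hcoe x₀ hx₀] at hhead hnodup hchain hlast
    refine ⟨?_, hnodup.of_map _, (List.isChain_map _).1 hchain, ?_⟩
    · rw [List.head?_map] at hhead
      obtain ⟨w, hw, hwe⟩ := Option.map_eq_some_iff.1 hhead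
      rw [hw]
      exact congrArg some (Subtype.val_injective hwe)
    · rw [List.getLast?_map] at hlast
      obtain ⟨t₀, ht₀, hte⟩ := Option.map_eq_some_iff.1 hlast
      exact ⟨t₀, by rw [Set.mem_setOf_eq, hte]; exact ht, ht₀⟩
  · intro x₀ hx₀ y₀ hy₀ hne v₀ hvx hvy
    have h1 : (v₀ : V) ∈ P (x₀ : V) := by
      rw [← hcoe x₀ hx₀]; exact List.mem_map_of_mem hvx
    have h2 : (v₀ : V) ∈ P (y₀ : V) := by
      rw [← hcoe y₀ hy₀]; exact List.mem_map_of_mem hvy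
    exact hd x₀ hx₀ y₀ hy₀ hne _ h1 h2

theorem main {α : Type u} (N : Matroid α)
    (hfin : N.Finite) (hN : IsGammoid N) (F : Type v) [Field F] [Infinite F] :
    RepresentableOver F N := by
  classical
  have hEfin : N.E.Finite := N.ground_finite
  by_cases hEe : N.E = ∅
  · refine ⟨ULift.{max u v} (Fin 0), fun _ => 0, fun I hI => ?_⟩
    rw [hEe, Set.subset_empty_iff] at hI
    subst hI
    haveI : IsEmpty (↥(∅ : Set α)) := by infer_instance
    exact iff_of_true (Matroid.empty_indep N) linearIndependent_empty_type
  obtain ⟨V, A, T, e, hinj, hiff⟩ := hN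
  set Sub := ↥{I : Set α | I ⊆ N.E ∧ N.Indep I} with hSub
  have hlink : ∀ s : Sub, Linked A T (e '' s.1) := fun s => (hiff s.1 s.2.1).1 s.2.2
  choose P hP hd using hlink
  set W : Set V := e '' N.E ∪ ⋃ s : Sub, ⋃ x ∈ e '' s.1, {w | w ∈ P s x} with hW
  have hWfin : W.Finite := by
    haveI : Finite Sub := (hEfin.finite_subsets.subset (fun I hI => hI.1)).to_subtype
    refine (hEfin.image e).union (Set.finite_iUnion fun s => ?_)
    exact Set.Finite.biUnion ((hEfin.subset s.2.1).image e) fun x _ => (P s x).finite_toSet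
  haveI : Fintype ↥W := hWfin.fintype
  haveI : Nonempty ↥W := by
    obtain ⟨a, ha⟩ := Set.nonempty_iff_ne_empty.2 hEe
    exact ⟨⟨e a, Set.mem_union_left _ (Set.mem_image_of_mem e ha)⟩⟩
  set A₀ : ↥W → ↥W → Prop := fun u v => A (u : V) (v : V) with hA₀
  set T₀ : Set ↥W := {v : ↥W | (v : V) ∈ T} with hT₀
  set e₀ : α → ↥W := fun a =>
    if h : e a ∈ W then ⟨e a, h⟩ else Classical.arbitrary ↥W with he₀
  have heW : ∀ a ∈ N.E, e a ∈ W := fun a ha =>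
    Set.mem_union_left _ (Set.mem_image_of_mem e ha)
  have he₀val : ∀ a ∈ N.E, (e₀ a : V) = e a := by
    intro a ha
    rw [he₀]
    simp only [dif_pos (heW a ha)]
  have hinj₀ : Set.InjOn e₀ N.E := by
    intro a ha b hb he'
    apply hinj ha hb
    rw [← he₀val a ha, ← he₀val b hb, he']
  -- the key equivalence
  have hIndep : ∀ I, I ⊆ N.E → (N.Indep I ↔ Linked A₀ T₀ (e₀ '' I)) := by
    intro I hIsub
    constructor
    · intro hI
      set s : Sub := ⟨I, hIsub, hI⟩ with hs
      have him : ∀ x₀ ∈ e₀ '' I, (x₀ : V) ∈ e '' I := by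
        rintro x₀ ⟨a, ha, rfl⟩
        rw [he₀val a (hIsub ha)]
        exact Set.mem_image_of_mem e ha
      refine linked_subtype_of_linked (P s) ?_ ?_ ?_
      · intro x₀ hx₀
        exact hP s (x₀ : V) (him x₀ hx₀)
      · intro x₀ hx₀ y₀ hy₀ hne
        exact hd s (x₀ : V) (him x₀ hx₀) (y₀ : V) (him y₀ hy₀)
          (fun he' => hne (Subtype.val_injective he'))
      · intro x₀ hx₀ w hw
        refine Set.mem_union_right _ ?_
        refine Set.mem_iUnion.2 ⟨s, ?_⟩
        refine Set.mem_biUnion (him x₀ hx₀) hw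
    · intro h
      apply (hiff I hIsub).2
      have h2 := linked_of_linked_subtype (A := A) (T := T) h
      have h3 : Subtype.val '' (e₀ '' I) = e '' I := by
        rw [Set.image_image]
        exact Set.image_congr fun a ha => he₀val a (hIsub ha)
      rwa [h3] at h2
  -- apply the finite representation
  obtain ⟨n, φfin, hrep⟩ := finite_rep (F := F) A₀ T₀
  set L : (Fin n → F) ≃ₗ[F] (ULift.{max u v} (Fin n) → F) :=
    LinearEquiv.funCongrLeft F F Equiv.ulift with hL
  refine ⟨ULift.{max u v} (Fin n), fun a => L (φfin (e₀ a)), fun I hIsub => ?_⟩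
  rw [hIndep I hIsub, hrep (e₀ '' I)]
  -- transfer linear independence along the bijections
  have step1 : (LinearIndependent F fun x : ↥(e₀ '' I) => φfin (x : ↥W)) ↔
      LinearIndependent F fun x : ↥I => φfin (e₀ (x : α)) := by
    refine (linearIndependent_equiv' (Equiv.Set.imageOfInjOn e₀ I (hinj₀.mono hIsub)) ?_).symm
    rfl
  have step2 : (LinearIndependent F fun x : ↥I => φfin (e₀ (x : α))) ↔
      LinearIndependent F fun x : ↥I => L (φfin (e₀ (x : α))) :=
    (LinearMap.linearIndependent_iff L.toLinearMap L.ker).symm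
  rw [step1, step2]


end Main

end GammoidProof

/-- Every gammoid is representable over every infinite field. -/
theorem gammoid_representable_over_infinite_field {α : Type u} (N : Matroid α)
    (hfin : N.Finite) (hN : IsGammoid N) (F : Type v) [Field F] [Infinite F] :
    RepresentableOver F N :=
  GammoidProof.main N hfin hN F
end

section
/- Let G be a directed graph, let S and T be sets of vertices of G, and let N be the gammoid L(G,S,T). If t is a vertex in S ∩ T, then N/t = L(G−t, S−t, T−t), where G−t denotes the directed graph obtained from G by deleting the vertex t. -/
/-!
Common definitions: digraphs, linkings, gammoids, minors, isomorphism.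
-/

universe u v

open Set

section Aux

open Matroid

private lemma mem_of_head?_aux {V : Type u} {l : List V} {x : V}
    (h : l.head? = some x) : x ∈ l := by
  cases l with
  | nil => simp at h
  | cons a l =>
    simp only [List.head?_cons, Option.some.injEq] at h
    simp [h]

private lemma mem_of_getLast?_aux {V : Type u} {l : List V} {x : V}
    (h : l.getLast? = some x) : x ∈ l := by
  induction l with
  | nil => simp at h
  | cons a l ih =>
    cases l with
    | nil =>
      simp only [List.getLast?_singleton, Option.some.injEq] at h
      simp [h]
    | cons b l' =>
      rw [List.getLast?_cons_cons] at h
      exact List.mem_cons_of_mem _ (ih h)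

private lemma chain'_ne_of_chain'_aux {V : Type u} {A : V → V → Prop} {t : V} :
    ∀ l : List V, l.Chain' A → t ∉ l →
      l.Chain' (fun v w => A v w ∧ v ≠ t ∧ w ≠ t) := by
  intro l
  induction l with
  | nil => intro _ _; exact List.isChain_nil
  | cons a l ih =>
    cases l with
    | nil => intro _ _; exact List.isChain_singleton _
    | cons b l' =>
      intro h htl
      rw [List.Chain', List.isChain_cons_cons] at h ⊢
      simp only [List.mem_cons, not_or] at htl
      exact ⟨⟨h.1, fun hc => htl.1 hc.symm, fun hc => htl.2.1 hc.symm⟩,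
        ih h.2 (by simp only [List.mem_cons, not_or]; exact ⟨htl.2.1, htl.2.2⟩)⟩

private lemma not_mem_of_chain'_aux {V : Type u} {A : V → V → Prop} {t : V} :
    ∀ l : List V, l.Chain' (fun v w => A v w ∧ v ≠ t ∧ w ≠ t) →
      ∀ x, l.head? = some x → x ≠ t → t ∉ l := by
  intro l
  induction l with
  | nil => simp
  | cons a l ih =>
    intro h x hx hxt
    simp only [List.head?_cons, Option.some.injEq] at hx
    subst hx
    cases l with
    | nil => simpa using Ne.symm hxt
    | cons b l' =>
      rw [List.Chain', List.isChain_cons_cons] at h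
      intro hm
      rcases List.mem_cons.mp hm with rfl | hm'
      · exact hxt rfl
      · exact ih h.2 b rfl h.1.2.2 hm'

/-- Independence in the contraction of an independent singleton. -/
private lemma con_aux_indep_iff {V : Type u} {N : Matroid V} {t : V}
    (hti : N.Indep {t}) {I : Set V} :
    (N.con {t}).Indep I ↔ I ⊆ N.E \ {t} ∧ N.Indep (I ∪ {t}) := by
  have htE : t ∈ N.E := hti.subset_ground rfl
  have hXE : N.E \ {t} ⊆ N✶.E := diff_subset
  constructor
  · intro hI
    have hI' : I ⊆ (N✶.del {t}).E ∧
        ∃ B, (N✶.del {t}).IsBase B ∧ Disjoint I B :=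
      Matroid.dual_indep_iff_exists'.mp hI
    obtain ⟨hIE, B, hB, hdisj⟩ := hI'
    have hIE' : I ⊆ N.E \ {t} := hIE
    refine ⟨hIE', ?_⟩
    have hBb : N✶.IsBasis B (N.E \ {t}) :=
      (Matroid.isBase_restrict_iff hXE).mp hB
    -- extend B to a base of the dual
    obtain ⟨B', hB', hBB'⟩ := hBb.indep.exists_isBase_superset
    have hBcap : B' ∩ (N.E \ {t}) = B := by
      refine (hBb.eq_of_subset_indep (hB'.indep.subset inter_subset_left)
        (subset_inter hBB' hBb.subset) inter_subset_right).symm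
    have hB'sub : B' ⊆ B ∪ {t} := by
      intro v hv
      by_cases hvt : v = t
      · exact Or.inr hvt
      · exact Or.inl (hBcap ▸ ⟨hv, hB'.subset_ground hv, hvt⟩)
    have htB : t ∉ B := fun h => (hBb.subset h).2 rfl
    have htB' : t ∉ B' := by
      intro htB'
      obtain ⟨B₀, hB₀, htB₀⟩ := hti.exists_isBase_superset
      have ht0 : t ∈ B₀ := htB₀ rfl
      have hd : N✶.IsBase (N.E \ B₀) := hB₀.compl_isBase_dual
      obtain ⟨y, hy, hyB⟩ := hB'.exchange hd ⟨htB', fun h => h.2 ht0⟩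
      have hB't : B' \ {t} = B := by
        apply subset_antisymm
        · intro v hv
          rcases hB'sub hv.1 with h | h
          · exact h
          · exact absurd h hv.2
        · intro v hv
          exact ⟨hBB' hv, fun h => htB (mem_singleton_iff.mp h ▸ hv)⟩
      rw [hB't] at hyB
      have hyt : y ≠ t := fun h => hy.1.2 (h ▸ ht0)
      have hynB : y ∉ B := fun h => hy.2 (hBB' h)
      have : B = insert y B :=
        hBb.eq_of_subset_indep hyB.indep (subset_insert _ _)
          (insert_subset ⟨hy.1.1, hyt⟩ hBb.subset)
      exact hynB (this ▸ mem_insert y B)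
    have hB'B : B' = B := subset_antisymm
      (fun v hv => (hB'sub hv).elim id (fun h => absurd (mem_singleton_iff.mp h ▸ hv) htB'))
      hBB'
    have hbase : N.IsBase (N.E \ B) := (hB'B ▸ hB').compl_isBase_of_dual
    refine hbase.indep.subset (union_subset ?_ ?_)
    · exact fun v hv => ⟨(hIE' hv).1, fun h => hdisj.ne_of_mem hv h rfl⟩
    · exact fun v hv => ⟨(mem_singleton_iff.mp hv) ▸ htE,
        fun h => htB ((mem_singleton_iff.mp hv) ▸ h)⟩
  · rintro ⟨hIE, hInd⟩
    obtain ⟨B₀, hB₀, hsub⟩ := hInd.exists_isBase_superset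
    have ht0 : t ∈ B₀ := hsub (Or.inr rfl)
    have hd : N✶.IsBase (N.E \ B₀) := hB₀.compl_isBase_dual
    have hbasis : N✶.IsBasis (N.E \ B₀) (N.E \ {t}) :=
      hd.isBasis_of_subset hXE (fun v hv => ⟨hv.1, fun h => hv.2 ((mem_singleton_iff.mp h) ▸ ht0)⟩)
    have hBase : (N✶.del {t}).IsBase (N.E \ B₀) :=
      (Matroid.isBase_restrict_iff hXE).mpr hbasis
    exact Matroid.dual_indep_iff_exists'.mpr
      ⟨hIE, N.E \ B₀, hBase,
        disjoint_left.mpr (fun v hv h => h.2 (hsub (Or.inl hv)))⟩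

end Aux

/-- If `N = L(G,S,T)` and `t ∈ S ∩ T`, then `N/t = L(G-t, S-t, T-t)`. -/
theorem con_singleton_linkMatroid {V : Type u} (A : V → V → Prop) (S T : Set V)
    (N : Matroid V) (hfin : N.Finite) (hN : IsLinkMatroid A S T N) (t : V)
    (ht : t ∈ S ∩ T) :
    IsLinkMatroid (fun v w => A v w ∧ v ≠ t ∧ w ≠ t) (S \ {t}) (T \ {t})
      (N.con {t}) := by
  classical
  obtain ⟨hE, hInd⟩ := hN
  obtain ⟨htS, htT⟩ := ht
  have htE : t ∈ N.E := hE ▸ htS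
  have hti : N.Indep {t} := by
    rw [hInd]
    refine ⟨by simpa using htS, ⟨fun _ => [t], ?_, ?_⟩⟩
    · intro x hx
      rw [mem_singleton_iff.mp hx]
      exact ⟨rfl, by simp, List.isChain_singleton _, t, htT, rfl⟩
    · intro x hx y hy hxy
      exact absurd ((mem_singleton_iff.mp hx).trans (mem_singleton_iff.mp hy).symm) hxy
  constructor
  · show (N.con {t}).E = S \ {t}
    simp [Matroid.con, Matroid.del, hE]
  intro I
  rw [con_aux_indep_iff hti]
  constructor
  · rintro ⟨hIE, hIt⟩
    rw [hE] at hIE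
    refine ⟨hIE, ?_⟩
    rw [hInd] at hIt
    obtain ⟨-, P, hP, hdis⟩ := hIt
    refine ⟨P, ?_, ?_⟩
    · intro x hx
      have hxU : x ∈ I ∪ {t} := Or.inl hx
      obtain ⟨hh, hnd, hch, s, hsT, hlast⟩ := hP x hxU
      have hxt : x ≠ t := fun h => (hIE hx).2 (by simp [h])
      have htP : t ∉ P x := by
        obtain ⟨hht, -⟩ := hP t (Or.inr rfl)
        exact hdis t (Or.inr rfl) x hxU (Ne.symm hxt) t (mem_of_head?_aux hht)
      refine ⟨hh, hnd, chain'_ne_of_chain'_aux _ hch htP, s,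
        ⟨hsT, fun hs => htP ?_⟩, hlast⟩
      have : s ∈ P x := mem_of_getLast?_aux hlast
      rwa [show s = t from hs] at this
    · intro x hx y hy hxy
      exact hdis x (Or.inl hx) y (Or.inl hy) hxy
  · rintro ⟨hIS, P, hP, hdis⟩
    have hIE : I ⊆ N.E \ {t} := hE ▸ hIS
    refine ⟨hIE, ?_⟩
    rw [hInd]
    have key : ∀ z ∈ I, t ∉ P z := fun z hz =>
      not_mem_of_chain'_aux _ (hP z hz).2.2.1 z (hP z hz).1
        (fun h => (hIS hz).2 (by simp [h]))
    refine ⟨union_subset (fun x hx => (hIS hx).1) (by simpa using htS),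
      fun x => if x = t then [t] else P x, ?_, ?_⟩
    · rintro x (hx | hx)
      · have hxt : x ≠ t := fun h => (hIS hx).2 (by simp [h])
        simp only [if_neg hxt]
        obtain ⟨hh, hnd, hch, s, hsT, hlast⟩ := hP x hx
        exact ⟨hh, hnd, List.IsChain.imp (fun _ _ h => h.1) hch, s, hsT.1, hlast⟩
      · simp only [mem_singleton_iff.mp hx, eq_self_iff_true, if_true]
        exact ⟨rfl, by simp, List.isChain_singleton _, t, htT, rfl⟩
    · rintro x hx y hy hxy v hv
      rcases hx with hx | hx
      · have hxt : x ≠ t := fun h => (hIS hx).2 (by simp [h])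
        simp only [if_neg hxt] at hv
        rcases hy with hy | hy
        · have hyt : y ≠ t := fun h => (hIS hy).2 (by simp [h])
          simp only [if_neg hyt]
          exact hdis x hx y hy hxy v hv
        · simp only [mem_singleton_iff.mp hy, eq_self_iff_true, if_true,
            List.mem_singleton]
          intro hvt
          exact key x hx (hvt ▸ hv)
      · simp only [if_pos (mem_singleton_iff.mp hx), List.mem_singleton] at hv
        rcases hy with hy | hy
        · have hyt : y ≠ t := fun h => (hIS hy).2 (by simp [h])
          simp only [if_neg hyt]
          rw [hv]
          exact key y hy
        · exact absurd ((mem_singleton_iff.mp hx).trans (mem_singleton_iff.mp hy).symm) hxy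
end

section
/- Let N be a gammoid on the ground set S ∪ T, where S ∩ T = ∅ and T is a basis of N. Then there exists a directed graph G whose vertex set V contains S ∪ T such that N = L(G, S ∪ T, T). -/
/-!
Common definitions: digraphs, linkings, gammoids, minors, isomorphism.
-/

universe u v

open Set

namespace GammoidPf

universe w

section WalkLemmas
variable {W : Type*}


variable {W : Type*}

/-- Partial iteration of a partial successor function. -/
def iterO (f : W → Option W) : ℕ → W → Option W
  | 0, x => some x
  | n+1, x => (iterO f n x).bind f

@[simp] lemma iterO_zero (f : W → Option W) (x : W) : iterO f 0 x = some x := rfl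

lemma iterO_succ (f : W → Option W) (n : ℕ) (x : W) :
    iterO f (n+1) x = (iterO f n x).bind f := rfl

lemma iterO_succ_some {f : W → Option W} {n : ℕ} {x v : W}
    (h : iterO f (n+1) x = some v) : ∃ u, iterO f n x = some u ∧ f u = some v := by
  rw [iterO_succ] at h
  cases hu : iterO f n x with
  | none => rw [hu] at h; simp at h
  | some u => rw [hu] at h; exact ⟨u, rfl, h⟩

lemma iterO_succ_of_some {f : W → Option W} {n : ℕ} {x u : W}
    (h : iterO f n x = some u) : iterO f (n+1) x = f u := by
  rw [iterO_succ, h]; rfl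

lemma iterO_none_mono {f : W → Option W} {x : W} {n m : ℕ} (hnm : n ≤ m)
    (h : iterO f n x = none) : iterO f m x = none := by
  induction m with
  | zero =>
    have : n = 0 := by omega
    exact this ▸ h
  | succ m ih =>
    rcases Nat.lt_or_ge n (m+1) with h' | h'
    · have := ih (by omega)
      rw [iterO_succ, this]; rfl
    · have : n = m + 1 := by omega
      exact this ▸ h

lemma iterO_defined_of_le {f : W → Option W} {x v : W} {n k : ℕ} (hk : k ≤ n)
    (h : iterO f n x = some v) : ∃ u, iterO f k x = some u := by
  cases hu : iterO f k x with
  | none => rw [iterO_none_mono hk hu] at h; simp at h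
  | some u => exact ⟨u, rfl⟩

/-- Key backward uniqueness: with injective `f`, coincidence of iterates implies
one start lies on the other's walk. -/
lemma iterO_back {f : W → Option W}
    (hinj : ∀ u v w, f u = some w → f v = some w → u = v) :
    ∀ (j k : ℕ) (x y v : W), j ≤ k → iterO f k x = some v → iterO f j y = some v →
      iterO f (k - j) x = some y := by
  intro j
  induction j with
  | zero =>
    intro k x y v _ hk hj
    simp at hj; subst hj; simpa using hk
  | succ j ih =>
    intro k x y v hjk hk hj
    obtain ⟨u, hju, hfu⟩ := iterO_succ_some hj
    obtain ⟨k', rfl⟩ : ∃ k', k = k' + 1 := ⟨k - 1, by omega⟩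
    obtain ⟨u', hku', hfu'⟩ := iterO_succ_some hk
    have heq : u' = u := hinj _ _ _ hfu' hfu
    rw [heq] at hku'
    have := ih k' x y u (by omega) hku' hju
    simpa [Nat.succ_sub_succ] using this

/-- Walks from a vertex not in the range of an injective, finitely supported
partial function terminate. -/
lemma exists_terminal {f : W → Option W}
    (hinj : ∀ u v w, f u = some w → f v = some w → u = v)
    (hfin : {u | f u ≠ none}.Finite) {x : W} (hx : ∀ u, f u ≠ some x) :
    ∃ n t, iterO f n x = some t ∧ f t = none := by
  by_contra hcon
  push_neg at hcon
  have hdef : ∀ n, ∃ u, iterO f n x = some u ∧ f u ≠ none := by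
    intro n
    induction n with
    | zero => exact ⟨x, rfl, fun h => by
        rcases hcon 0 x rfl with h'
        exact h' h⟩
    | succ n ih =>
      obtain ⟨u, hu, hfu⟩ := ih
      cases hv : f u with
      | none => exact absurd hv hfu
      | some v =>
        refine ⟨v, ?_, fun h => hcon (n+1) v (by rw [iterO_succ_of_some hu, hv]) h⟩
        rw [iterO_succ_of_some hu, hv]
  choose g hg hg' using hdef
  have hginj : Function.Injective g := by
    intro a b hab
    by_contra hne
    rcases Nat.lt_or_ge a b with h | h
    · have := iterO_back hinj a b x x (g a) (by omega) (by rw [hg b, hab] : iterO f b x = some (g a)) (hg a)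
      -- iterO f (b - a) x = some x with b - a ≥ 1
      obtain ⟨m, hm⟩ : ∃ m, b - a = m + 1 := ⟨b - a - 1, by omega⟩
      rw [hm] at this
      obtain ⟨u, _, hu⟩ := iterO_succ_some this
      exact hx u hu
    · have hlt : b < a := by omega
      have hga : iterO f a x = some (g b) := by rw [hg a, hab]
      have := iterO_back hinj b a x x (g b) (by omega) hga (hg b)
      obtain ⟨m, hm⟩ : ∃ m, a - b = m + 1 := ⟨a - b - 1, by omega⟩
      rw [hm] at this
      obtain ⟨u, _, hu⟩ := iterO_succ_some this
      exact hx u hu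
  exact Set.infinite_of_injective_forall_mem hginj (fun n => hg' n) hfin


/-- A successor-function linkage system. -/
def Sys (A : W → W → Prop) (T X : Set W) (f : W → Option W) : Prop :=
  (∀ u v, f u = some v → A u v) ∧
  (∀ u v w, f u = some w → f v = some w → u = v) ∧
  (∀ x ∈ X, ∀ u, f u ≠ some x) ∧
  (∀ x ∈ X, ∃ n t, iterO f n x = some t ∧ f t = none ∧ t ∈ T)

def Norm (X : Set W) (f : W → Option W) : Prop :=
  (∀ u, f u ≠ none → ∃ x ∈ X, ∃ k, iterO f k x = some u) ∧ {u | f u ≠ none}.Finite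


/-- Two walks of a system never meet (unless same start and step). -/
lemma walk_distinct {f : W → Option W} {X : Set W}
    (hinj : ∀ u v w, f u = some w → f v = some w → u = v)
    (hnoX : ∀ x ∈ X, ∀ u, f u ≠ some x) :
    ∀ x ∈ X, ∀ y ∈ X, ∀ k j u, iterO f k x = some u → iterO f j y = some u →
      x = y ∧ k = j := by
  have aux : ∀ x ∈ X, ∀ (y : W), y ∈ X → ∀ k j u, j ≤ k → iterO f k x = some u →
      iterO f j y = some u → x = y ∧ k = j := by
    intro x hx y hy k j u hjk hk hj
    have hb := iterO_back hinj j k x y u hjk hk hj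
    rcases Nat.eq_zero_or_pos (k - j) with h0 | h0
    · rw [h0] at hb
      have hb' : some x = some y := hb
      injection hb' with hb2
      exact ⟨hb2, by omega⟩
    · obtain ⟨m, hm⟩ : ∃ m, k - j = m + 1 := ⟨k - j - 1, by omega⟩
      rw [hm] at hb
      obtain ⟨w, _, hw⟩ := iterO_succ_some hb
      exact absurd hw (hnoX y hy w)
  intro x hx y hy k j u hk hj
  rcases le_total j k with h | h
  · exact aux x hx y hy k j u h hk hj
  · obtain ⟨h1, h2⟩ := aux y hy x hx j k u h hj hk
    exact ⟨h1.symm, h2.symm⟩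

/-- From a successor system to a path family. -/
lemma Sys.linked {A : W → W → Prop} {T X : Set W} {f : W → Option W}
    (h : Sys A T X f) : Linked A T X := by
  classical
  obtain ⟨harc, hinj, hnoX, hreach⟩ := h
  choose! n t hn ht htT using hreach
  set g : W → ℕ → W := fun x k => (iterO f k x).getD x with hg
  have hgdef : ∀ x ∈ X, ∀ k ≤ n x, iterO f k x = some (g x k) := by
    intro x hx k hk
    obtain ⟨u, hu⟩ := iterO_defined_of_le hk (hn x hx)
    rw [hg]; simp only; rw [hu]; rfl
  refine ⟨fun x => if hx : x ∈ X then (List.range (n x + 1)).map (g x) else [], ?_, ?_⟩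
  · intro x hx
    simp only [dif_pos hx]
    have hlen : ((List.range (n x + 1)).map (g x)).length = n x + 1 := by simp
    refine ⟨?_, ?_, ?_, t x, htT x hx, ?_⟩
    · rw [List.range_succ_eq_map]
      simp only [List.map_cons]
      have : g x 0 = x := by rw [hg]; simp [iterO]
      rw [this]; rfl
    · refine List.Nodup.map_on ?_ List.nodup_range
      intro k hk j hj hkj
      simp only [List.mem_range] at hk hj
      have h1 := hgdef x hx k (by omega)
      have h2 := hgdef x hx j (by omega)
      rw [hkj] at h1
      exact (walk_distinct hinj hnoX x hx x hx k j _ h1 h2).2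
    · simp only [List.Chain']; rw [List.isChain_map, List.isChain_range_succ]
      intro m hm
      have h1 := hgdef x hx m (by omega)
      have h2 := hgdef x hx (m+1) (by omega)
      have := iterO_succ_of_some h1
      rw [h2] at this
      exact harc _ _ this.symm
    · rw [List.getLast?_eq_getElem?]
      rw [hlen]
      simp only [Nat.add_sub_cancel]
      rw [List.getElem?_map]
      simp only [List.getElem?_range (by omega : n x < n x + 1)]
      have := hgdef x hx (n x) (le_refl _)
      rw [hn x hx] at this
      simp at this
      simp [this]
  · intro x hx y hy hxy v hvx hvy
    simp only [dif_pos hx] at hvx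
    simp only [dif_pos hy] at hvy
    obtain ⟨k, hk, hgk⟩ := List.mem_map.1 hvx
    obtain ⟨j, hj, hgj⟩ := List.mem_map.1 hvy
    simp only [List.mem_range] at hk hj
    have h1 := hgdef x hx k (by omega)
    have h2 := hgdef y hy j (by omega)
    rw [hgk] at h1; rw [hgj] at h2
    exact hxy (walk_distinct hinj hnoX x hx y hy k j v h1 h2).1

open Classical in
noncomputable def nextIn : List W → W → Option W
  | [], _ => none
  | [_], _ => none
  | a :: b :: t, u => if a = u then some b else nextIn (b :: t) u

lemma nextIn_tail_mem : ∀ {l : List W} {u w : W}, nextIn l u = some w → w ∈ l.tail := by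
  intro l
  induction l with
  | nil => intro u w h; simp [nextIn] at h
  | cons a t ih =>
    intro u w h
    cases t with
    | nil => simp [nextIn] at h
    | cons b t' =>
      rw [nextIn] at h
      split at h
      · simp at h; simp [h]
      · have := ih h
        simp only [List.tail_cons]
        exact List.mem_of_mem_tail this

lemma nextIn_mem {l : List W} {u w : W} (h : nextIn l u = some w) : w ∈ l :=
  List.mem_of_mem_tail (nextIn_tail_mem h)

lemma nextIn_head_ne {l : List W} {u w : W} (hnd : l.Nodup) (h : nextIn l u = some w) :
    l.head? ≠ some w := by
  intro hh
  cases l with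
  | nil => simp at hh
  | cons a t =>
    simp at hh
    subst hh
    have := nextIn_tail_mem h
    simp only [List.tail_cons] at this
    exact (List.nodup_cons.1 hnd).1 this

lemma nextIn_chain' {R : W → W → Prop} : ∀ {l : List W} {u w : W},
    l.Chain' R → nextIn l u = some w → R u w := by
  intro l
  induction l with
  | nil => intro u w _ h; simp [nextIn] at h
  | cons a t ih =>
    intro u w hc h
    cases t with
    | nil => simp [nextIn] at h
    | cons b t' =>
      rw [nextIn] at h
      split at h
      · rename_i heq
        simp at h
        subst heq; subst h
        exact (List.isChain_cons_cons.1 hc).1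
      · exact ih (List.isChain_cons_cons.1 hc).2 h

lemma nextIn_pred_unique : ∀ {l : List W} {u v w : W}, l.Nodup →
    nextIn l u = some w → nextIn l v = some w → u = v := by
  intro l
  induction l with
  | nil => intro u v w _ h; simp [nextIn] at h
  | cons a t ih =>
    intro u v w hnd hu hv
    cases t with
    | nil => simp [nextIn] at hu
    | cons b t' =>
      rw [nextIn] at hu hv
      split at hu <;> split at hv
      · rename_i h1 h2; rw [← h1, ← h2]
      · rename_i h1 h2
        simp at hu; subst hu
        exact absurd rfl (nextIn_head_ne (List.nodup_cons.1 hnd).2 hv)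
      · rename_i h1 h2
        simp at hv; subst hv
        exact absurd rfl (nextIn_head_ne (List.nodup_cons.1 hnd).2 hu)
      · exact ih (List.nodup_cons.1 hnd).2 hu hv

lemma nextIn_getElem : ∀ {l : List W}, l.Nodup → ∀ {k : ℕ} (h : k + 1 < l.length),
    nextIn l (l[k]) = some (l[k+1]) := by
  intro l
  induction l with
  | nil => intro _ k h; simp at h
  | cons a t ih =>
    intro hnd k h
    cases t with
    | nil => simp at h
    | cons b t' =>
      cases k with
      | zero => simp [nextIn]
      | succ k' =>
        have hk2 : k' + 1 < (b :: t').length := by simpa using h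
        have hk1 : k' < (b :: t').length := by omega
        simp only [List.getElem_cons_succ]
        rw [nextIn]
        have hmem : (b :: t')[k'] ∈ (b :: t') := List.getElem_mem hk1
        have hane : a ≠ (b :: t')[k'] := by
          intro hEq
          apply (List.nodup_cons.1 hnd).1
          rw [hEq]; exact hmem
        rw [if_neg hane]
        exact ih (List.nodup_cons.1 hnd).2 hk2

lemma nextIn_getLast : ∀ {l : List W} {u : W}, l.Nodup → l.getLast? = some u →
    nextIn l u = none := by
  intro l
  induction l with
  | nil => intro u _ h; simp at h
  | cons a t ih =>
    intro u hnd hl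
    cases t with
    | nil => simp [nextIn]
    | cons b t' =>
      rw [List.getLast?_cons_cons] at hl
      have hu : u ∈ (b :: t') := List.mem_of_mem_getLast? (by rw [hl]; rfl)
      rw [nextIn, if_neg (by intro hEq; apply (List.nodup_cons.1 hnd).1; rw [hEq]; exact hu)]
      exact ih (List.nodup_cons.1 hnd).2 hl

lemma Linked.sys {A : W → W → Prop} {T X : Set W} (hX : X.Finite) (h : Linked A T X) :
    ∃ f, Sys A T X f ∧ Norm X f := by
  classical
  obtain ⟨P, hP, hdisj⟩ := h
  have huniq : ∀ {u x y}, x ∈ X → y ∈ X → u ∈ P x → u ∈ P y → x = y := by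
    intro u x y hx hy hux huy
    by_contra hne
    exact hdisj x hx y hy hne u hux huy
  set f : W → Option W :=
    fun u => if h : ∃ x, x ∈ X ∧ u ∈ P x then nextIn (P (Classical.choose h)) u else none
    with hf
  have hfpos : ∀ {u x}, x ∈ X → u ∈ P x → f u = nextIn (P x) u := by
    intro u x hx hux
    have hex : ∃ x, x ∈ X ∧ u ∈ P x := ⟨x, hx, hux⟩
    have hspec := Classical.choose_spec hex
    simp only [hf, dif_pos hex]
    rw [huniq hspec.1 hx hspec.2 hux]
  have hfcases : ∀ u v, f u = some v → ∃ x ∈ X, u ∈ P x ∧ nextIn (P x) u = some v := by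
    intro u v huv
    simp only [hf] at huv
    split at huv
    · rename_i hex
      have hspec := Classical.choose_spec hex
      exact ⟨_, hspec.1, hspec.2, huv⟩
    · simp at huv
  have hmemx : ∀ x ∈ X, x ∈ P x := by
    intro x hx
    have := (hP x hx).1
    exact List.mem_of_mem_head? (by rw [this]; rfl)
  have hwalk : ∀ x ∈ X, ∀ k, (hk : k < (P x).length) → iterO f k x = some ((P x)[k]) := by
    intro x hx k
    induction k with
    | zero =>
      intro hk
      have h0 := (hP x hx).1
      rw [List.head?_eq_getElem?, List.getElem?_eq_getElem hk] at h0
      injection h0 with h0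
      show some x = some ((P x)[0])
      rw [h0]
    | succ k' ih =>
      intro hk
      have hk' : k' < (P x).length := by omega
      have := iterO_succ_of_some (ih hk')
      rw [this, hfpos hx (List.getElem_mem hk')]
      exact nextIn_getElem (hP x hx).2.1 hk
  refine ⟨f, ⟨?_, ?_, ?_, ?_⟩, ?_, ?_⟩
  · intro u v huv
    obtain ⟨x, hx, hux, hnext⟩ := hfcases u v huv
    exact nextIn_chain' (hP x hx).2.2.1 hnext
  · intro u v w hu hv
    obtain ⟨x, hx, hux, hnx⟩ := hfcases u w hu
    obtain ⟨y, hy, hvy, hny⟩ := hfcases v w hv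
    have : x = y := huniq hx hy (nextIn_mem hnx) (nextIn_mem hny)
    subst this
    exact nextIn_pred_unique (hP x hx).2.1 hnx hny
  · intro x hx u hu
    obtain ⟨y, hy, huy, hny⟩ := hfcases u x hu
    have : y = x := huniq hy hx (nextIn_mem hny) (hmemx x hx)
    subst this
    exact nextIn_head_ne (hP y hy).2.1 hny (hP y hy).1
  · intro x hx
    have hlen : 0 < (P x).length := by
      cases hPx : P x with
      | nil => have := (hP x hx).1; rw [hPx] at this; simp at this
      | cons a t => simp
    obtain ⟨t', ht'T, ht'⟩ := (hP x hx).2.2.2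
    have hlen1 : (P x).length - 1 < (P x).length := by omega
    have hlast : (P x).getLast? = some ((P x)[(P x).length - 1]) := by
      rw [List.getLast?_eq_getElem?, List.getElem?_eq_getElem hlen1]
    refine ⟨(P x).length - 1, (P x)[(P x).length - 1], hwalk x hx _ (by omega), ?_, ?_⟩
    · rw [hfpos hx (List.getElem_mem (by omega))]
      exact nextIn_getLast (hP x hx).2.1 hlast
    · rw [hlast] at ht'
      injection ht' with hh
      exact hh ▸ ht'T
  · intro u hu
    simp only [hf] at hu
    split at hu
    · rename_i hex
      have hspec := Classical.choose_spec hex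
      obtain ⟨k, hk, hEq⟩ := List.getElem_of_mem hspec.2
      refine ⟨_, hspec.1, k, ?_⟩
      have := hwalk _ hspec.1 k hk
      rw [this, hEq]
    · simp at hu
  · have : {u | f u ≠ none} ⊆ ⋃ x ∈ X, {v | v ∈ P x} := by
      intro u hu
      simp only [Set.mem_setOf_eq, hf] at hu
      split at hu
      · rename_i hex
        have hspec := Classical.choose_spec hex
        exact Set.mem_biUnion hspec.1 hspec.2
      · simp at hu
    exact Set.Finite.subset (Set.Finite.biUnion hX (fun x _ => (P x).finite_toSet)) this

/-- Residual arc relation: original arcs minus forward `q`-arcs, plus reversed `q`-arcs. -/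
def Res (A₀ : W → W → Prop) (q : W → Option W) (u v : W) : Prop :=
  (A₀ u v ∧ q u ≠ some v) ∨ q v = some u

/-- A vertex of `X` not in `T` has a successor. -/
lemma sys_reach_start {B : W → W → Prop} {TF XF : Set W} {f : W → Option W}
    (hS : Sys B TF XF f) {y : W} (hy : y ∈ XF) (hyT : y ∉ TF) : f y ≠ none := by
  obtain ⟨n, t, hnt, hft, htT⟩ := hS.2.2.2 y hy
  intro h0
  have h1 : iterO f 1 y = none := by
    show (iterO f 0 y).bind f = none
    show f y = none
    exact h0
  rcases Nat.eq_zero_or_pos n with rfl | hn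
  · have : some y = some t := hnt
    injection this with h
    exact hyT (h ▸ htT)
  · have := iterO_none_mono (by omega : 1 ≤ n) h1
    rw [this] at hnt; cases hnt

/-- Successors of supported vertices exist or lie in the target set. -/
lemma sys_range_step {B : W → W → Prop} {TF XF : Set W} {f : W → Option W}
    (hS : Sys B TF XF f) (hN : Norm XF f) {w u : W} (h : f w = some u) :
    f u ≠ none ∨ u ∈ TF := by
  have hw : f w ≠ none := by rw [h]; exact fun hc => by cases hc
  obtain ⟨x, hx, k, hk⟩ := hN.1 w hw
  have hk1 : iterO f (k+1) x = some u := by rw [iterO_succ_of_some hk, h]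
  obtain ⟨n, t, hnt, hft, htT⟩ := hS.2.2.2 x hx
  rcases Nat.lt_or_ge (k+1) n with hlt | hge
  · left
    intro h0
    have h2 : iterO f (k+2) x = none := by rw [iterO_succ_of_some hk1, h0]
    have := iterO_none_mono (show k+2 ≤ n by omega) h2
    rw [this] at hnt; cases hnt
  · rcases Nat.eq_or_lt_of_le hge with heq | hgt
    · right
      rw [heq] at hnt
      rw [hk1] at hnt
      injection hnt with h'
      exact h' ▸ htT
    · exfalso
      have h1 : iterO f (n+1) x = none := by rw [iterO_succ_of_some hnt, hft]
      have := iterO_none_mono (show n+1 ≤ k+1 by omega) h1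
      rw [this] at hk1; cases hk1

/-- A supported vertex is a start or has a predecessor. -/
lemma sys_supp_cases {XF : Set W} {f : W → Option W}
    (hN : Norm XF f) {u : W} (h : f u ≠ none) : u ∈ XF ∨ ∃ v, f v = some u := by
  obtain ⟨x, hx, k, hk⟩ := hN.1 u h
  cases k with
  | zero =>
    have : some x = some u := hk
    injection this with h'
    exact Or.inl (h' ▸ hx)
  | succ k' =>
    obtain ⟨v, _, hv⟩ := iterO_succ_some hk
    exact Or.inr ⟨v, hv⟩

/-- The flow-sum lemma: composing a residual linkage into `Y` with the base
linkage `q` of `Y` yields a linkage in the original graph. -/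
lemma sum_lemma {A₀ : W → W → Prop} {T₀ TP X Y : Set W} {q p : W → Option W}
    (hT0out : ∀ τ ∈ T₀, ∀ v, ¬ A₀ τ v)
    (hT0in : ∀ τ ∈ T₀, ∀ u v, A₀ u τ → A₀ v τ → u = v)
    (hdeg : ∀ u, (∀ v w, A₀ u v → A₀ u w → v = w) ∨ (∀ v w, A₀ v u → A₀ w u → v = w))
    (hq : Sys A₀ T₀ Y q) (hqN : Norm Y q)
    (hp : Sys (Res A₀ q) TP X p) (hpN : Norm X p)
    (hTP : TP ⊆ Y ∪ T₀)
    (hXY : ∀ x ∈ X, x ∉ Y) (hXT0 : ∀ x ∈ X, x ∉ T₀) (hYT0 : ∀ y ∈ Y, y ∉ T₀)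
    (hnoin : ∀ u z, z ∈ X ∪ Y → ¬ A₀ u z)
    (hout : ∀ z ∈ X ∪ Y, ∀ v w, A₀ z v → A₀ z w → v = w) :
    ∃ s, Sys A₀ T₀ (X ∪ (Y \ {u | ∃ w, p w = some u})) s := by
  classical
  obtain ⟨hqarc, hqinj, hqnoX, hqreach⟩ := hq
  obtain ⟨hparc, hpinj, hpnoX, hpreach⟩ := hp
  have hq' : Sys A₀ T₀ Y q := ⟨hqarc, hqinj, hqnoX, hqreach⟩
  have hp' : Sys (Res A₀ q) TP X p := ⟨hparc, hpinj, hpnoX, hpreach⟩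
  have hq3 : ∀ y ∈ Y, q y ≠ none := fun y hy => sys_reach_start hq' hy (hYT0 y hy)
  have hqD2 : ∀ w u, q w = some u → q u ≠ none ∨ u ∈ T₀ :=
    fun w u h => sys_range_step hq' hqN h
  have hpD2 : ∀ w u, p w = some u → p u ≠ none ∨ u ∈ TP :=
    fun w u h => sys_range_step hp' hpN h
  have hqrXY : ∀ w z, q w = some z → z ∉ X ∪ Y :=
    fun w z h hz => hnoin w z hz (hqarc w z h)
  have F3 : ∀ x ∈ X, p x ≠ none := by
    intro x hx
    refine sys_reach_start hp' hx (fun hxTP => ?_)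
    rcases hTP hxTP with h | h
    · exact hXY x hx h
    · exact hXT0 x hx h
  set s : W → Option W := fun u =>
    if h1 : ∃ v, p u = some v ∧ ¬ q v = some u then p u
    else if h2 : ∃ v, q u = some v ∧ ¬ p v = some u then q u
    else none with hs
  have hs_some : ∀ u v, s u = some v →
      (p u = some v ∧ ¬ q v = some u) ∨ (q u = some v ∧ ¬ p v = some u) := by
    intro u v h
    simp only [hs] at h
    split at h
    · rename_i h1
      obtain ⟨v', hv', hq'⟩ := h1
      rw [hv'] at h
      injection h with h
      subst h
      exact Or.inl ⟨hv', hq'⟩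
    · split at h
      · rename_i h2
        obtain ⟨v', hv', hp'⟩ := h2
        rw [hv'] at h
        injection h with h
        subst h
        exact Or.inr ⟨hv', hp'⟩
      · cases h
  have hs_none : ∀ u, s u = none →
      (∀ v, p u = some v → q v = some u) ∧ (∀ v, q u = some v → p v = some u) := by
    intro u h
    simp only [hs] at h
    split at h
    · rename_i h1
      obtain ⟨v', hv', hq'⟩ := h1
      rw [hv'] at h; cases h
    · rename_i h1
      push_neg at h1
      split at h
      · rename_i h2
        obtain ⟨v', hv', hp'⟩ := h2
        rw [hv'] at h; cases h
      · rename_i h2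
        push_neg at h2
        exact ⟨fun v hv => not_not.1 (fun hc => hc (h1 v hv)) , h2⟩
  have S_arc : ∀ u v, s u = some v → A₀ u v := by
    intro u v h
    rcases hs_some u v h with ⟨hpv, hqv⟩ | ⟨hqv, _⟩
    · rcases hparc u v hpv with ⟨hA, _⟩ | hrev
      · exact hA
      · exact absurd hrev hqv
    · exact hqarc u v hqv
  have S_mixed : ∀ w1 w2 u, (p w1 = some u ∧ ¬ q u = some w1) →
      (q w2 = some u ∧ ¬ p u = some w2) → w1 = w2 := by
    intro w1 w2 u ⟨hpv, hnq⟩ ⟨hqv, hnp⟩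
    have hA1 : A₀ w1 u := by
      rcases hparc w1 u hpv with ⟨hA, _⟩ | hrev
      · exact hA
      · exact absurd hrev hnq
    have hA2 : A₀ w2 u := hqarc w2 u hqv
    by_cases hu0 : u ∈ T₀
    · exact hT0in u hu0 w1 w2 hA1 hA2
    · rcases hpD2 w1 u hpv with hpu | hTPu
      · cases hpuv : p u with
        | none => exact absurd hpuv hpu
        | some z1 =>
          rcases hparc u z1 hpuv with ⟨hA3, hq3'⟩ | hrev
          · rcases hqD2 w2 u hqv with hqu | hT0u
            · cases hquv : q u with
              | none => exact absurd hquv hqu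
              | some z2 =>
                rcases hdeg u with hOut | hIn
                · have hz12 := hOut z1 z2 hA3 (hqarc u z2 hquv)
                  rw [← hz12] at hquv
                  exact absurd hquv hq3'
                · exact hIn w1 w2 hA1 hA2
            · exact absurd hT0u hu0
          · have := hqinj z1 w2 u hrev hqv
            subst this
            exact absurd hpuv hnp
      · rcases hTP hTPu with hY | hT0'
        · exact absurd (Or.inr hY) (hqrXY w2 u hqv)
        · exact absurd hT0' hu0
  have S_inj : ∀ w1 w2 u, s w1 = some u → s w2 = some u → w1 = w2 := by
    intro w1 w2 u h1 h2
    rcases hs_some w1 u h1 with hL1 | hR1 <;> rcases hs_some w2 u h2 with hL2 | hR2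
    · exact hpinj w1 w2 u hL1.1 hL2.1
    · exact S_mixed w1 w2 u hL1 hR2
    · exact (S_mixed w2 w1 u hL2 hR1).symm
    · exact hqinj w1 w2 u hR1.1 hR2.1
  have S_noXin : ∀ z ∈ X ∪ (Y \ {u | ∃ w, p w = some u}), ∀ u, s u ≠ some z := by
    intro z hz u h
    rcases hs_some u z h with ⟨hpz, _⟩ | ⟨hqz, _⟩
    · rcases hz with hzX | hzY
      · exact hpnoX z hzX u hpz
      · exact hzY.2 ⟨u, hpz⟩
    · rcases hz with hzX | hzY
      · exact hqrXY u z hqz (Or.inl hzX)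
      · exact hqrXY u z hqz (Or.inr hzY.1)
  have supp_fin : {u | s u ≠ none}.Finite := by
    refine Set.Finite.subset (hpN.2.union hqN.2) ?_
    intro u hu
    simp only [Set.mem_setOf_eq] at hu
    cases h : s u with
    | none => exact absurd h hu
    | some v =>
      rcases hs_some u v h with ⟨hpv, _⟩ | ⟨hqv, _⟩
      · exact Or.inl (by simp only [Set.mem_setOf_eq, hpv]; exact fun hc => by cases hc)
      · exact Or.inr (by simp only [Set.mem_setOf_eq, hqv]; exact fun hc => by cases hc)
  have CLAIM : ∀ u, s u = none → (u ∈ X ∪ (Y \ {u | ∃ w, p w = some u}) ∨ ∃ w, s w = some u) →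
      u ∈ T₀ := by
    intro u hsu hu
    obtain ⟨hc1, hc2⟩ := hs_none u hsu
    cases hpu : p u with
    | some v =>
      have hqvu := hc1 v hpu
      cases hqu : q u with
      | none =>
        rcases hqD2 v u hqvu with h | h
        · exact absurd hqu h
        · exact h
      | some w =>
        have hpwu := hc2 w hqu
        exfalso
        rcases hu with (hX | hY) | ⟨w', hsw'⟩
        · exact hqrXY v u hqvu (Or.inl hX)
        · exact hY.2 ⟨w, hpwu⟩
        · rcases hs_some w' u hsw' with ⟨hpw', hnq⟩ | ⟨hqw', hnp⟩
          · have := hpinj w' w u hpw' hpwu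
            subst this
            exact hnq hqu
          · have := hqinj w' v u hqw' hqvu
            subst this
            exact hnp hpu
    | none =>
      cases hqu : q u with
      | some w =>
        have hpwu := hc2 w hqu
        rcases hpD2 w u hpwu with h | hTPu
        · exact absurd hpu h
        · rcases hTP hTPu with hYu | hT0u
          · exfalso
            rcases hu with (hX | hY) | ⟨w', hsw'⟩
            · exact hXY u hX hYu
            · exact hY.2 ⟨w, hpwu⟩
            · rcases hs_some w' u hsw' with ⟨hpw', hnq⟩ | ⟨hqw', _⟩
              · have := hpinj w' w u hpw' hpwu
                subst this
                exact hnq hqu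
              · exact hqrXY w' u hqw' (Or.inr hYu)
          · exact hT0u
      | none =>
        rcases hu with (hX | hY) | ⟨w', hsw'⟩
        · exact absurd hpu (F3 u hX)
        · exact absurd hqu (hq3 u hY.1)
        · rcases hs_some w' u hsw' with ⟨hpw', _⟩ | ⟨hqw', _⟩
          · rcases hpD2 w' u hpw' with h | hTPu
            · exact absurd hpu h
            · rcases hTP hTPu with hYu | hT0u
              · exact absurd hqu (hq3 u hYu)
              · exact hT0u
          · rcases hqD2 w' u hqw' with h | hT0u
            · exact absurd hqu h
            · exact hT0u
  refine ⟨s, S_arc, S_inj, S_noXin, ?_⟩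
  intro z hz
  obtain ⟨n, t, hnt, hst⟩ := exists_terminal S_inj supp_fin (S_noXin z hz)
  refine ⟨n, t, hnt, hst, CLAIM t hst ?_⟩
  cases n with
  | zero =>
    have : some z = some t := hnt
    injection this with h
    exact Or.inl (h ▸ hz)
  | succ n' =>
    obtain ⟨w, _, hw⟩ := iterO_succ_some hnt
    exact Or.inr ⟨w, hw⟩

/-- The flow-difference lemma: subtracting the base linkage `q` of `Y` from a
linkage of `XB` yields a residual-graph linkage of `XB` into `Y ∪ T₀`. -/
lemma diff_lemma {A₀ : W → W → Prop} {T₀ XB Y : Set W} {p q : W → Option W}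
    (hT0out : ∀ τ ∈ T₀, ∀ v, ¬ A₀ τ v)
    (hdeg : ∀ u, (∀ v w, A₀ u v → A₀ u w → v = w) ∨ (∀ v w, A₀ v u → A₀ w u → v = w))
    (hp : Sys A₀ T₀ XB p) (hpN : Norm XB p) (hq : Sys A₀ T₀ Y q) (hqN : Norm Y q)
    (hXT0 : ∀ x ∈ XB, x ∉ T₀) (hYT0 : ∀ y ∈ Y, y ∉ T₀)
    (hnoin : ∀ u z, z ∈ XB ∪ Y → ¬ A₀ u z)
    (hout : ∀ z ∈ XB ∪ Y, ∀ v w, A₀ z v → A₀ z w → v = w) :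
    ∃ r, Sys (Res A₀ q) (Y ∪ T₀) XB r ∧ (∀ y ∈ Y, r y = none) := by
  classical
  obtain ⟨hqarc, hqinj, hqnoX, hqreach⟩ := hq
  obtain ⟨hparc, hpinj, hpnoX, hpreach⟩ := hp
  have hq' : Sys A₀ T₀ Y q := ⟨hqarc, hqinj, hqnoX, hqreach⟩
  have hp' : Sys A₀ T₀ XB p := ⟨hparc, hpinj, hpnoX, hpreach⟩
  have hq3 : ∀ y ∈ Y, q y ≠ none := fun y hy => sys_reach_start hq' hy (hYT0 y hy)
  have hp3 : ∀ x ∈ XB, p x ≠ none := fun x hx => sys_reach_start hp' hx (hXT0 x hx)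
  have hqD2 : ∀ w u, q w = some u → q u ≠ none ∨ u ∈ T₀ :=
    fun w u h => sys_range_step hq' hqN h
  have hpD2 : ∀ w u, p w = some u → p u ≠ none ∨ u ∈ T₀ :=
    fun w u h => sys_range_step hp' hpN h
  have hqrXY : ∀ w z, q w = some z → z ∉ XB ∪ Y :=
    fun w z h hz => hnoin w z hz (hqarc w z h)
  have hprXY : ∀ w z, p w = some z → z ∉ XB ∪ Y :=
    fun w z h hz => hnoin w z hz (hparc w z h)
  have hqsupp : ∀ u, q u ≠ none → u ∈ XB ∪ Y → u ∈ Y := by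
    intro u hu huXY
    rcases sys_supp_cases hqN hu with h | ⟨v, hv⟩
    · exact h
    · exact absurd huXY (hqrXY v u hv)
  have hpsupp : ∀ u, p u ≠ none → u ∈ XB ∪ Y → u ∈ XB := by
    intro u hu huXY
    rcases sys_supp_cases hpN hu with h | ⟨v, hv⟩
    · exact h
    · exact absurd huXY (hprXY v u hv)
  set r : W → Option W := fun u =>
    if h1 : ∃ v, p u = some v ∧ ¬ q u = some v then p u
    else if h2 : ∃ v, q v = some u ∧ ¬ p v = some u then some (Classical.choose h2)
    else none with hr
  have hr_some : ∀ u v, r u = some v →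
      (p u = some v ∧ ¬ q u = some v) ∨ (q v = some u ∧ ¬ p v = some u) := by
    intro u v h
    simp only [hr] at h
    split at h
    · rename_i h1
      obtain ⟨v', hv', hq'⟩ := h1
      rw [hv'] at h
      injection h with h
      subst h
      exact Or.inl ⟨hv', hq'⟩
    · split at h
      · rename_i h2
        injection h with h
        have hspec := Classical.choose_spec h2
        rw [h] at hspec
        exact Or.inr hspec
      · cases h
  have hr_none : ∀ u, r u = none →
      (∀ v, p u = some v → q u = some v) ∧ (∀ v, q v = some u → p v = some u) := by
    intro u h
    simp only [hr] at h
    split at h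
    · rename_i h1
      obtain ⟨v', hv', _⟩ := h1
      rw [hv'] at h; cases h
    · rename_i h1
      push_neg at h1
      split at h
      · cases h
      · rename_i h2
        push_neg at h2
        exact ⟨fun v hv => not_not.1 (fun hc => hc (h1 v hv)), h2⟩
  have R_arc : ∀ u v, r u = some v → Res A₀ q u v := by
    intro u v h
    rcases hr_some u v h with ⟨hpv, hnq⟩ | ⟨hqv, _⟩
    · exact Or.inl ⟨hparc u v hpv, hnq⟩
    · exact Or.inr hqv
  have R_inj : ∀ w1 w2 u, r w1 = some u → r w2 = some u → w1 = w2 := by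
    have mixed : ∀ w1 w2 u, (p w1 = some u ∧ ¬ q w1 = some u) →
        (q u = some w2 ∧ ¬ p u = some w2) → w1 = w2 := by
      intro w1 w2 u ⟨hpw, hnq⟩ ⟨hqu, hnp⟩
      have hA1 : A₀ w1 u := hparc w1 u hpw
      have huY : q u ≠ none := by rw [hqu]; exact fun hc => by cases hc
      rcases sys_supp_cases hqN huY with hYu | ⟨v0, hv0⟩
      · exact absurd (hnoin w1 u (Or.inr hYu)) (fun hc => hc hA1)
      · have hA0 : A₀ v0 u := hqarc v0 u hv0
        rcases hdeg u with hOut | hIn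
        · rcases hpD2 w1 u hpw with hpu | hT0u
          · cases hpuv : p u with
            | none => exact absurd hpuv hpu
            | some z =>
              have hz := hOut z w2 (hparc u z hpuv) (hqarc u w2 hqu)
              rw [hz] at hpuv
              exact absurd hpuv hnp
          · exact absurd (hqarc u w2 hqu) (hT0out u hT0u w2)
        · have := hIn v0 w1 hA0 hA1
          rw [← this] at hnq
          exact absurd hv0 hnq
    intro w1 w2 u h1 h2
    rcases hr_some w1 u h1 with hL1 | hR1 <;> rcases hr_some w2 u h2 with hL2 | hR2
    · exact hpinj w1 w2 u hL1.1 hL2.1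
    · exact mixed w1 w2 u hL1 hR2
    · exact (mixed w2 w1 u hL2 hR1).symm
    · exact Option.some_injective W (hR1.1.symm.trans hR2.1)
  have R_noXin : ∀ x ∈ XB, ∀ u, r u ≠ some x := by
    intro x hx u h
    rcases hr_some u x h with ⟨hpx, _⟩ | ⟨hqx, hnp⟩
    · exact hpnoX x hx u hpx
    · have hxY : x ∈ Y := hqsupp x (by rw [hqx]; exact fun hc => by cases hc) (Or.inl hx)
      cases hpx : p x with
      | none => exact hp3 x hx hpx
      | some v1 =>
        have := hout x (Or.inl hx) v1 u (hparc x v1 hpx) (hqarc x u hqx)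
        rw [this] at hpx
        exact hnp hpx
  have hrY : ∀ y ∈ Y, r y = none := by
    intro y hy
    cases h : r y with
    | none => rfl
    | some v =>
      exfalso
      rcases hr_some y v h with ⟨hpv, hnq⟩ | ⟨hqv, _⟩
      · have hyXB : y ∈ XB := hpsupp y (by rw [hpv]; exact fun hc => by cases hc) (Or.inr hy)
        cases hqy : q y with
        | none => exact hq3 y hy hqy
        | some z =>
          have := hout y (Or.inr hy) v z (hparc y v hpv) (hqarc y z hqy)
          rw [← this] at hqy
          exact hnq hqy
      · exact hqrXY v y hqv (Or.inr hy)
  have supp_fin : {u | r u ≠ none}.Finite := by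
    have h1 : ((fun v => (q v).getD v) '' {v | q v ≠ none}).Finite := hqN.2.image _
    refine Set.Finite.subset (hpN.2.union h1) ?_
    intro u hu
    simp only [Set.mem_setOf_eq] at hu
    cases h : r u with
    | none => exact absurd h hu
    | some v =>
      rcases hr_some u v h with ⟨hpv, _⟩ | ⟨hqv, _⟩
      · exact Or.inl (by simp only [Set.mem_setOf_eq, hpv]; exact fun hc => by cases hc)
      · refine Or.inr ⟨v, ?_, ?_⟩
        · simp only [Set.mem_setOf_eq, hqv]; exact fun hc => by cases hc
        · show (q v).getD v = u
          rw [hqv]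
          rfl
  have CLAIM : ∀ u, r u = none → (u ∈ XB ∨ ∃ w, r w = some u) → u ∈ Y ∪ T₀ := by
    intro u hru hu
    obtain ⟨hc1, hc2⟩ := hr_none u hru
    cases hpu : p u with
    | some v =>
      have hqv := hc1 v hpu
      rcases hu with hX | ⟨w, hw⟩
      · exact Or.inl (hqsupp u (by rw [hqv]; exact fun hc => by cases hc) (Or.inl hX))
      · rcases hr_some w u hw with ⟨hpw, hnq⟩ | ⟨hqu', hnp⟩
        · by_cases hrange : ∃ v0, q v0 = some u
          · obtain ⟨v0, hv0⟩ := hrange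
            have hpv0 := hc2 v0 hv0
            have heq := hpinj v0 w u hpv0 hpw
            rw [← heq] at hnq
            exact absurd hv0 hnq
          · rcases sys_supp_cases hqN
              (show q u ≠ none by rw [hqv]; exact fun hc => by cases hc) with h | h
            · exact Or.inl h
            · exact absurd h hrange
        · rw [hqv] at hqu'
          injection hqu' with h
          rw [← h] at hnp
          exact absurd hpu hnp
    | none =>
      rcases hu with hX | ⟨w, hw⟩
      · exact absurd hpu (hp3 u hX)
      · rcases hr_some w u hw with ⟨hpw, _⟩ | ⟨hqu', hnp⟩
        · rcases hpD2 w u hpw with h | hT0u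
          · exact absurd hpu h
          · exact Or.inr hT0u
        · rcases sys_supp_cases hqN
            (show q u ≠ none by rw [hqu']; exact fun hc => by cases hc) with h | ⟨v0, hv0⟩
          · exact Or.inl h
          · have hpv0 := hc2 v0 hv0
            rcases hpD2 v0 u hpv0 with h | hT0u
            · exact absurd hpu h
            · exact Or.inr hT0u
  have R_reach : ∀ x ∈ XB, ∃ n t, iterO r n x = some t ∧ r t = none ∧ t ∈ Y ∪ T₀ := by
    intro x hx
    obtain ⟨n, t, hnt, hrt⟩ := exists_terminal R_inj supp_fin (R_noXin x hx)
    refine ⟨n, t, hnt, hrt, CLAIM t hrt ?_⟩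
    cases n with
    | zero =>
      have : some x = some t := hnt
      injection this with h
      exact Or.inl (h ▸ hx)
    | succ n' =>
      obtain ⟨w, _, hw⟩ := iterO_succ_some hnt
      exact Or.inr ⟨w, hw⟩
  exact ⟨r, ⟨R_arc, R_inj, R_noXin, R_reach⟩, hrY⟩


end WalkLemmas

inductive GVert (α : Type u) (V : Type u) : Type u
  | base : α → GVert α V
  | vin : V → GVert α V
  | vout : V → GVert α V
  | vsink : V → GVert α V

variable {α V : Type u}

inductive GArc (E : Set α) (e : α → V) (A : V → V → Prop) (T₁ : Set V) :
    GVert α V → GVert α V → Prop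
  | base {a : α} (h : a ∈ E) : GArc E e A T₁ (.base a) (.vin (e a))
  | thru (v : V) : GArc E e A T₁ (.vin v) (.vout v)
  | arc {u v : V} (h : A u v) : GArc E e A T₁ (.vout u) (.vin v)
  | sink {τ : V} (h : τ ∈ T₁) : GArc E e A T₁ (.vout τ) (.vsink τ)

def expand : List V → List (GVert α V)
  | [] => []
  | v :: t => .vin v :: .vout v :: expand t

lemma mem_expand {l : List V} {w : GVert α V} :
    w ∈ expand l ↔ ∃ v ∈ l, w = .vin v ∨ w = .vout v := by
  induction l with
  | nil => simp [expand]
  | cons v t ih =>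
    simp only [expand, List.mem_cons, ih]
    constructor
    · rintro (rfl | rfl | ⟨u, hu, h⟩)
      · exact ⟨v, Or.inl rfl, Or.inl rfl⟩
      · exact ⟨v, Or.inl rfl, Or.inr rfl⟩
      · exact ⟨u, Or.inr hu, h⟩
    · rintro ⟨u, (rfl | hu), h⟩
      · rcases h with rfl | rfl
        · exact Or.inl rfl
        · exact Or.inr (Or.inl rfl)
      · exact Or.inr (Or.inr ⟨u, hu, h⟩)

lemma expand_head? {l : List V} {x : V} (h : l.head? = some x) :
    (expand l : List (GVert α V)).head? = some (GVert.vin x) := by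
  cases l with
  | nil => simp at h
  | cons v t => simp at h; subst h; rfl

lemma expand_ne_nil {l : List V} (h : l ≠ []) : (expand l : List (GVert α V)) ≠ [] := by
  cases l with
  | nil => exact absurd rfl h
  | cons v t => simp [expand]

lemma expand_getLast? : ∀ {l : List V} {x : V}, l.getLast? = some x →
    (expand l : List (GVert α V)).getLast? = some (GVert.vout x) := by
  intro l
  induction l with
  | nil => intro x h; simp at h
  | cons v t ih =>
    intro x h
    cases t with
    | nil =>
      simp at h; subst h; rfl
    | cons w t' =>
      rw [List.getLast?_cons_cons] at h
      show (GVert.vin v :: GVert.vout v :: GVert.vin w :: GVert.vout w :: expand t').getLast?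
        = some (GVert.vout x)
      rw [List.getLast?_cons_cons, List.getLast?_cons_cons]
      exact ih h

lemma expand_nodup : ∀ {l : List V}, l.Nodup → (expand l : List (GVert α V)).Nodup := by
  intro l
  induction l with
  | nil => intro _; simp [expand]
  | cons v t ih =>
    intro h
    rw [List.nodup_cons] at h
    show ((GVert.vin v) :: (GVert.vout v) :: expand t).Nodup
    rw [List.nodup_cons, List.nodup_cons]
    refine ⟨?_, ?_, ih h.2⟩
    · simp only [List.mem_cons, mem_expand]
      rintro (h' | ⟨u, hu, h' | h'⟩) <;> simp_all
    · simp only [mem_expand]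
      rintro ⟨u, hu, h' | h'⟩ <;> simp_all

variable {E : Set α} {e : α → V} {A : V → V → Prop} {T₁ : Set V}

lemma expand_chain' : ∀ {l : List V}, l.Chain' A →
    (expand l : List (GVert α V)).Chain' (GArc E e A T₁) := by
  intro l
  induction l with
  | nil => intro _; exact List.isChain_nil
  | cons v t ih =>
    intro h
    show List.Chain' _ ((GVert.vin v) :: (GVert.vout v) :: expand t)
    simp only [List.Chain']; rw [List.isChain_cons_cons]
    refine ⟨GArc.thru v, ?_⟩
    simp only [List.Chain'] at h; rw [List.isChain_cons] at h ⊢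
    refine ⟨?_, ih h.2⟩
    intro y hy
    cases t with
    | nil => simp [expand] at hy
    | cons w t' =>
      have hh : (expand (w :: t') : List (GVert α V)).head? = some (GVert.vin w) := rfl
      rw [hh] at hy
      simp at hy
      subst hy
      exact GArc.arc (h.1 w rfl)

lemma getLast?_cons_ne_nil {β : Type*} {x : β} {l : List β} (h : l ≠ []) :
    (x :: l).getLast? = l.getLast? := by
  cases l with
  | nil => exact absurd rfl h
  | cons a t => rw [List.getLast?_cons_cons]

/-- Forward direction of the bridge. -/
lemma bridge_mp {I : Set α} (hIE : I ⊆ E) (hinj : Set.InjOn e E)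
    (h : Linked A T₁ (e '' I)) :
    Linked (GArc E e A T₁) (GVert.vsink '' T₁) ((GVert.base : α → GVert α V) '' I) := by
  classical
  obtain ⟨P, hP, hdisj⟩ := h
  have hprops : ∀ a ∈ I, (P (e a)).head? = some (e a) ∧ (P (e a)).Nodup ∧
      (P (e a)).Chain' A ∧ ∃ t ∈ T₁, (P (e a)).getLast? = some t :=
    fun a ha => hP (e a) ⟨a, ha, rfl⟩
  have hex : ∀ a : α, ∃ t : V, a ∈ I → (t ∈ T₁ ∧ (P (e a)).getLast? = some t) := by
    intro a
    by_cases ha : a ∈ I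
    · obtain ⟨t, ht, h'⟩ := (hprops a ha).2.2.2
      exact ⟨t, fun _ => ⟨ht, h'⟩⟩
    · exact ⟨e a, fun ha' => absurd ha' ha⟩
  choose τ hτ using hex
  have hτ₁ : ∀ a ∈ I, τ a ∈ T₁ := fun a ha => (hτ a ha).1
  have hτ₂ : ∀ a ∈ I, (P (e a)).getLast? = some (τ a) := fun a ha => (hτ a ha).2
  set Q : GVert α V → List (GVert α V) := fun x =>
    match x with
    | .base a => if a ∈ I then (.base a :: expand (P (e a))) ++ [.vsink (τ a)] else []
    | _ => [] with hQ
  have hQval : ∀ a ∈ I, Q (.base a) = (.base a :: expand (P (e a))) ++ [.vsink (τ a)] := by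
    intro a ha
    simp only [hQ, if_pos ha]
  have hmemQ : ∀ a ∈ I, ∀ w, w ∈ Q (.base a) ↔
      (w = .base a ∨ (∃ v ∈ P (e a), w = .vin v ∨ w = .vout v) ∨ w = .vsink (τ a)) := by
    intro a ha w
    rw [hQval a ha]
    simp [mem_expand, or_assoc]
  have hτmem : ∀ a ∈ I, τ a ∈ P (e a) := by
    intro a ha
    exact List.mem_of_mem_getLast? (by rw [hτ₂ a ha]; rfl)
  refine ⟨Q, ?_, ?_⟩
  · rintro x ⟨a, ha, rfl⟩
    rw [hQval a ha]
    obtain ⟨hhead, hnodup, hchain, -⟩ := hprops a ha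
    have hne : P (e a) ≠ [] := by
      intro h'; rw [h'] at hhead; simp at hhead
    refine ⟨?_, ?_, ?_, GVert.vsink (τ a), ⟨τ a, hτ₁ a ha, rfl⟩, List.getLast?_concat⟩
    · rw [List.cons_append]; rfl
    · rw [List.nodup_append]
      refine ⟨?_, List.nodup_singleton _, ?_⟩
      · rw [List.nodup_cons]
        refine ⟨?_, expand_nodup hnodup⟩
        rw [mem_expand]
        rintro ⟨v, hv, h' | h'⟩ <;> simp at h'
      · intro w hw
        simp only [List.mem_singleton]
        rintro _ rfl h'
        subst h'
        simp only [List.mem_cons, mem_expand] at hw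
        rcases hw with h' | ⟨v, hv, h' | h'⟩ <;> simp at h'
    · simp only [List.Chain']; rw [List.isChain_append]
      refine ⟨?_, List.isChain_singleton _, ?_⟩
      · rw [List.isChain_cons]
        refine ⟨?_, expand_chain' hchain⟩
        intro y hy
        rw [expand_head? hhead] at hy
        simp at hy
        subst hy
        exact GArc.base (hIE ha)
      · intro w hw y hy
        simp only [List.head?_cons, Option.mem_def, Option.some.injEq] at hy
        subst hy
        rw [getLast?_cons_ne_nil (expand_ne_nil hne), expand_getLast? (hτ₂ a ha)] at hw
        simp at hw
        subst hw
        exact GArc.sink (hτ₁ a ha)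
  · rintro x ⟨a, ha, rfl⟩ y ⟨b, hb, rfl⟩ hxy w hwx hwy
    have hab : a ≠ b := fun h => hxy (h ▸ rfl)
    have heab : e a ≠ e b := fun h => hab (hinj (hIE ha) (hIE hb) h)
    have hPd : ∀ v, v ∈ P (e a) → v ∉ P (e b) :=
      hdisj (e a) ⟨a, ha, rfl⟩ (e b) ⟨b, hb, rfl⟩ heab
    rw [hmemQ a ha] at hwx
    rw [hmemQ b hb] at hwy
    rcases hwx with rfl | ⟨v, hv, rfl | rfl⟩ | rfl
    · rcases hwy with h' | ⟨v', hv', h' | h'⟩ | h'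
      · exact hab (by injection h')
      · exact nomatch h'
      · exact nomatch h'
      · exact nomatch h'
    · rcases hwy with h' | ⟨v', hv', h' | h'⟩ | h'
      · exact nomatch h'
      · injection h' with h''
        exact hPd v hv (h'' ▸ hv')
      · exact nomatch h'
      · exact nomatch h'
    · rcases hwy with h' | ⟨v', hv', h' | h'⟩ | h'
      · exact nomatch h'
      · exact nomatch h'
      · injection h' with h''
        exact hPd v hv (h'' ▸ hv')
      · exact nomatch h'
    · rcases hwy with h' | ⟨v', hv', h' | h'⟩ | h'
      · exact nomatch h'
      · exact nomatch h'
      · exact nomatch h'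
      · injection h' with h''
        exact hPd (τ a) (hτmem a ha) (h'' ▸ hτmem b hb)

lemma decode_aux : ∀ (k : ℕ) (l : List (GVert α V)), l.length ≤ k →
    l.Chain' (GArc E e A T₁) → l.Nodup →
    ∀ v : V, l.head? = some (.vin v) →
    (∃ τ ∈ T₁, l.getLast? = some (.vsink τ)) →
    ∃ m : List V, m.head? = some v ∧ m.Chain' A ∧ m.Nodup ∧
      (∃ τ ∈ T₁, m.getLast? = some τ) ∧ (∀ u, u ∈ m ↔ GVert.vin u ∈ l) := by
  intro k
  induction k with
  | zero =>
    intro l hlen _ _ v hhead _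
    rw [List.length_eq_zero_iff.1 (Nat.le_zero.1 hlen)] at hhead
    simp at hhead
  | succ k ih =>
    intro l hlen hchain hnodup v hhead hlast
    cases l with
    | nil => simp at hhead
    | cons x l1 =>
      simp only [List.head?_cons, Option.some.injEq] at hhead
      subst hhead
      cases l1 with
      | nil =>
        obtain ⟨τ, hτ, hl⟩ := hlast
        simp at hl
      | cons y l2 =>
        simp only [List.Chain'] at hchain; rw [List.isChain_cons_cons] at hchain
        cases hchain.1
        -- y = vout v
        cases l2 with
        | nil =>
          obtain ⟨τ, hτ, hl⟩ := hlast
          simp at hl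
        | cons z l3 =>
          have hchain2 := hchain.2
          rw [List.isChain_cons_cons] at hchain2
          cases hchain2.1 with
          | @arc _ w hA =>
            -- z = vin w
            have hrec := ih (GVert.vin w :: l3) (by simp at hlen ⊢; omega) hchain2.2
              ((List.nodup_cons.1 (List.nodup_cons.1 hnodup).2).2) w rfl
              (by
                obtain ⟨τ, hτ, hl⟩ := hlast
                rw [List.getLast?_cons_cons, List.getLast?_cons_cons] at hl
                exact ⟨τ, hτ, hl⟩)
            obtain ⟨m, hmh, hmc, hmn, hml, hmm⟩ := hrec
            cases m with
            | nil => simp at hmh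
            | cons w' m' =>
              simp only [List.head?_cons, Option.some.injEq] at hmh
              replace hmh := hmh.symm
              subst hmh
              refine ⟨v :: w :: m', rfl, ?_, ?_, ?_, ?_⟩
              · simp only [List.Chain']; rw [List.isChain_cons_cons]
                exact ⟨hA, hmc⟩
              · rw [List.nodup_cons]
                refine ⟨?_, hmn⟩
                intro hvm
                have hmem := (hmm v).1 hvm
                have hvin : GVert.vin v ∈ GVert.vout v :: GVert.vin w :: l3 := by
                  rcases List.mem_cons.1 hmem with h | h
                  · exact List.mem_cons_of_mem _ (by rw [h]; exact List.mem_cons_self)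
                  · exact List.mem_cons_of_mem _ (List.mem_cons_of_mem _ h)
                exact (List.nodup_cons.1 hnodup).1 hvin
              · obtain ⟨τ, hτ, hml'⟩ := hml
                exact ⟨τ, hτ, by rw [List.getLast?_cons_cons]; exact hml'⟩
              · intro u
                constructor
                · intro hu
                  rcases List.mem_cons.1 hu with rfl | hu
                  · exact List.mem_cons_self
                  · have := (hmm u).1 hu
                    exact List.mem_cons_of_mem _ (List.mem_cons_of_mem _ this)
                · intro hu
                  rcases List.mem_cons.1 hu with hu | hu
                  · injection hu with hu; subst hu; exact List.mem_cons_self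
                  · rcases List.mem_cons.1 hu with hu | hu
                    · exact nomatch hu
                    · exact List.mem_cons_of_mem _ ((hmm u).2 hu)
          | sink hτ =>
            -- z = vsink v, v ∈ T₁
            cases l3 with
            | cons c l4 =>
              have := hchain2.2
              rw [List.isChain_cons_cons] at this
              cases this.1
            | nil =>
              refine ⟨[v], rfl, List.isChain_singleton _, List.nodup_singleton _,
                ⟨v, hτ, rfl⟩, ?_⟩
              intro u
              constructor
              · intro hu
                rcases List.mem_cons.1 hu with rfl | hu
                · exact List.mem_cons_self
                · simp at hu
              · intro hu
                rcases List.mem_cons.1 hu with hu | hu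
                · injection hu with hu; subst hu; exact List.mem_cons_self
                · rcases List.mem_cons.1 hu with hu | hu
                  · exact nomatch hu
                  · rcases List.mem_cons.1 hu with hu | hu
                    · exact nomatch hu
                    · simp at hu

lemma decode_path {l : List (GVert α V)} {a : α}
    (hchain : l.Chain' (GArc E e A T₁)) (hnodup : l.Nodup)
    (hhead : l.head? = some (.base a))
    (hlast : ∃ τ ∈ T₁, l.getLast? = some (.vsink τ)) :
    ∃ m : List V, m.head? = some (e a) ∧ m.Chain' A ∧ m.Nodup ∧
      (∃ τ ∈ T₁, m.getLast? = some τ) ∧ (∀ u, u ∈ m → GVert.vin u ∈ l) := by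
  cases l with
  | nil => simp at hhead
  | cons x t =>
    simp only [List.head?_cons, Option.some.injEq] at hhead
    subst hhead
    cases t with
    | nil =>
      obtain ⟨τ, hτ, hl⟩ := hlast
      simp at hl
    | cons y t' =>
      simp only [List.Chain'] at hchain; rw [List.isChain_cons_cons] at hchain
      cases hchain.1 with
      | base hE =>
        obtain ⟨m, h1, h2, h3, h4, h5⟩ := decode_aux (GVert.vin (e a) :: t').length
          (GVert.vin (e a) :: t') le_rfl
          hchain.2 (List.nodup_cons.1 hnodup).2 (e a) rfl
          (by
            obtain ⟨τ, hτ, hl⟩ := hlast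
            rw [List.getLast?_cons_cons] at hl
            exact ⟨τ, hτ, hl⟩)
        exact ⟨m, h1, h2, h3, h4, fun u hu => List.mem_cons_of_mem _ ((h5 u).1 hu)⟩

/-- Backward direction of the bridge. -/
lemma bridge_mpr {I : Set α} (hIE : I ⊆ E) (hinj : Set.InjOn e E)
    (h : Linked (GArc E e A T₁) (GVert.vsink '' T₁) ((GVert.base : α → GVert α V) '' I)) :
    Linked A T₁ (e '' I) := by
  classical
  obtain ⟨Q, hQ, hQd⟩ := h
  have hdec : ∀ a : α, ∃ m : List V, a ∈ I → (m.head? = some (e a) ∧ m.Chain' A ∧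
      m.Nodup ∧ (∃ τ ∈ T₁, m.getLast? = some τ) ∧
      (∀ u, u ∈ m → GVert.vin u ∈ Q (GVert.base a))) := by
    intro a
    by_cases ha : a ∈ I
    · obtain ⟨h1, h2, h3, t, ⟨τ, hτ, rfl⟩, h5⟩ := hQ (GVert.base a) ⟨a, ha, rfl⟩
      obtain ⟨m, hm⟩ := decode_path h3 h2 h1 ⟨τ, hτ, h5⟩
      exact ⟨m, fun _ => hm⟩
    · exact ⟨[], fun h' => absurd h' ha⟩
  choose m hm using hdec
  have hchoose : ∀ x : V, x ∈ e '' I → ∃ a, a ∈ I ∧ e a = x := fun x hx => by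
    obtain ⟨a, ha, rfl⟩ := hx; exact ⟨a, ha, rfl⟩
  set P : V → List V := fun x =>
    if h : ∃ a, a ∈ I ∧ e a = x then m (Classical.choose h) else [] with hP
  refine ⟨P, ?_, ?_⟩
  · intro x hx
    have hex : ∃ a, a ∈ I ∧ e a = x := hchoose x hx
    obtain ⟨ha, hax⟩ := Classical.choose_spec hex
    simp only [hP, dif_pos hex]
    obtain ⟨h1, h2, h3, h4, h5⟩ := hm _ ha
    exact ⟨by rw [h1, hax], h3, h2, h4⟩
  · intro x hx y hy hxy v hvx hvy
    have hexx : ∃ a, a ∈ I ∧ e a = x := hchoose x hx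
    have hexy : ∃ a, a ∈ I ∧ e a = y := hchoose y hy
    obtain ⟨hax, haxe⟩ := Classical.choose_spec hexx
    obtain ⟨hay, haye⟩ := Classical.choose_spec hexy
    simp only [hP, dif_pos hexx] at hvx
    simp only [hP, dif_pos hexy] at hvy
    set a := Classical.choose hexx
    set b := Classical.choose hexy
    have hab : a ≠ b := fun h => hxy (by rw [← haxe, ← haye, h])
    have h1 := (hm a hax).2.2.2.2 v hvx
    have h2 := (hm b hay).2.2.2.2 v hvy
    exact hQd (GVert.base a) ⟨a, hax, rfl⟩ (GVert.base b) ⟨b, hay, rfl⟩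
      (fun h => hab (by injection h)) (GVert.vin v) h1 h2


end GammoidPf


/-- Let `N` be a gammoid on the ground set `S ∪ T` where `S ∩ T = ∅` and `T` is a
base of `N`. Then there is a digraph, on a vertex type into which the ground
type embeds (so its vertex set contains `S ∪ T`), exhibiting `N` as
`L(G, S ∪ T, T)`. -/
theorem gammoid_eq_linkMatroid_basis_target {α : Type u} (N : Matroid α)
    (hfin : N.Finite) (hN : IsGammoid N) (S T : Set α) (hE : N.E = S ∪ T)
    (hST : Disjoint S T) (hT : N.IsBase T) :
    ∃ (W : Type u) (ι : α ↪ W) (A : W → W → Prop),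
      ∀ I : Set α, N.Indep I ↔ I ⊆ S ∪ T ∧ Linked A (ι '' T) (ι '' I) := by
  classical
  open GammoidPf in
  obtain ⟨V, A, T₁, e, he, hiff⟩ := hN
  have hEfin : N.E.Finite := hfin.ground_finite
  have hTE : T ⊆ N.E := hT.subset_ground
  set A₀ : GVert α V → GVert α V → Prop := GArc N.E e A T₁ with hA₀def
  set T₀ : Set (GVert α V) := GVert.vsink '' T₁ with hT₀def
  have pres : ∀ I : Set α, I ⊆ N.E →
      (N.Indep I ↔ Linked A₀ T₀ ((GVert.base : α → GVert α V) '' I)) := by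
    intro I hI
    exact (hiff I hI).trans ⟨fun h => bridge_mp hI he h, fun h => bridge_mpr hI he h⟩
  have hT0out : ∀ τ ∈ T₀, ∀ v, ¬ A₀ τ v := by
    rintro τ ⟨t, ht, rfl⟩ v harc
    cases harc
  have hT0in : ∀ τ ∈ T₀, ∀ u v, A₀ u τ → A₀ v τ → u = v := by
    rintro τ ⟨t, ht, rfl⟩ u v h1 h2
    cases h1; cases h2; rfl
  have hdeg : ∀ u : GVert α V,
      (∀ v w, A₀ u v → A₀ u w → v = w) ∨ (∀ v w, A₀ v u → A₀ w u → v = w) := by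
    intro u
    cases u with
    | base a => exact Or.inl (fun v w h1 h2 => by cases h1; cases h2; rfl)
    | vin x => exact Or.inl (fun v w h1 h2 => by cases h1; cases h2; rfl)
    | vout x => exact Or.inr (fun v w h1 h2 => by cases h1; cases h2; rfl)
    | vsink x => exact Or.inr (fun v w h1 h2 => by cases h1; cases h2; rfl)
  have hnoinJ : ∀ (J : Set α) (u z), z ∈ (GVert.base : α → GVert α V) '' J → ¬ A₀ u z := by
    rintro J u z ⟨a, _, rfl⟩ harc
    cases harc
  have houtJ : ∀ (J : Set α), ∀ z ∈ (GVert.base : α → GVert α V) '' J,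
      ∀ v w, A₀ z v → A₀ z w → v = w := by
    rintro J z ⟨a, _, rfl⟩ v w h1 h2
    cases h1; cases h2; rfl
  have hbinj : Function.Injective (GVert.base : α → GVert α V) := fun a b h => by
    injection h
  have hbT₀ : ∀ (J : Set α), ∀ x ∈ (GVert.base : α → GVert α V) '' J, x ∉ T₀ := by
    rintro J x ⟨a, _, rfl⟩ ⟨t, _, h⟩
    exact nomatch h
  have hTlink := (pres T hTE).1 hT.indep
  obtain ⟨q, hqS, hqN⟩ := Linked.sys ((hEfin.subset hTE).image _) hTlink
  refine ⟨GVert α V, ⟨GVert.base, hbinj⟩, Res A₀ q, fun I => ?_⟩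
  simp only [Function.Embedding.coeFn_mk]
  constructor
  · intro hI
    have hIE : I ⊆ N.E := hI.subset_ground
    refine ⟨hE ▸ hIE, ?_⟩
    obtain ⟨B₀, hB₀, hIB₀, hB₀IT⟩ := hI.exists_isBase_subset_union_isBase hT
    have hB₀E : B₀ ⊆ N.E := hB₀.subset_ground
    obtain ⟨p₁, hp₁S, hp₁N⟩ := Linked.sys ((hEfin.subset hB₀E).image _)
      ((pres B₀ hB₀E).1 hB₀.indep)
    obtain ⟨r, hrS, hrY⟩ := diff_lemma hT0out hdeg hp₁S hp₁N hqS hqN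
      (hbT₀ B₀) (hbT₀ T)
      (by intro u z hz
          rcases hz with hz | hz
          · exact hnoinJ B₀ u z hz
          · exact hnoinJ T u z hz)
      (by intro z hz
          rcases hz with hz | hz
          · exact houtJ B₀ z hz
          · exact houtJ T z hz)
    have hterm : ∀ x ∈ (GVert.base : α → GVert α V) '' I,
        ∃ n t', iterO r n x = some t' ∧ r t' = none ∧
          t' ∈ (GVert.base : α → GVert α V) '' T := by
      intro x hx
      have hxB : x ∈ (GVert.base : α → GVert α V) '' B₀ := Set.image_mono hIB₀ hx
      obtain ⟨n, t', h1, h2, h3⟩ := hrS.2.2.2 x hxB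
      rcases h3 with h3 | h3
      · exact ⟨n, t', h1, h2, h3⟩
      exfalso
      obtain ⟨b, hbI, rfl⟩ := hx
      have hbB₀ : b ∈ B₀ := hIB₀ hbI
      have hbT : b ∉ T := by
        intro hbT
        have hx0 : r (GVert.base b) = none := hrY _ ⟨b, hbT, rfl⟩
        rcases Nat.eq_zero_or_pos n with rfl | hn
        · have h1' : some (GVert.base b) = some t' := h1
          injection h1' with h'
          exact hbT₀ {b} t' (by rw [← h']; exact ⟨b, rfl, rfl⟩) h3
        · obtain ⟨m, rfl⟩ : ∃ m, n = m + 1 := ⟨n - 1, by omega⟩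
          have h1' : iterO r 1 (GVert.base b) = none := by
            show (iterO r 0 (GVert.base b)).bind r = none
            show r (GVert.base b) = none
            exact hx0
          have := iterO_none_mono (show 1 ≤ m + 1 by omega) h1'
          rw [this] at h1; cases h1
      have hSx : Sys (Res A₀ q) {t'} {GVert.base b} r :=
        ⟨hrS.1, hrS.2.1,
          fun z hz => by
            rw [Set.mem_singleton_iff] at hz
            subst hz
            exact hrS.2.2.1 _ ⟨b, hbB₀, rfl⟩,
          fun z hz => by
            rw [Set.mem_singleton_iff] at hz
            subst hz
            exact ⟨n, t', h1, h2, rfl⟩⟩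
      obtain ⟨p'', hp''S, hp''N⟩ := Linked.sys (Set.finite_singleton _) (Sys.linked hSx)
      have hp''Y : ∀ w y, p'' w = some y → y ∉ (GVert.base : α → GVert α V) '' T := by
        intro w y hw hyY
        rcases sys_range_step hp''S hp''N hw with hpy | hyt
        · cases hpyv : p'' y with
          | none => exact hpy hpyv
          | some z =>
            rcases hp''S.1 y z hpyv with ⟨hA, hqy⟩ | hrev
            · obtain ⟨c, hcT, rfl⟩ := hyY
              have hqyne : q (GVert.base c) ≠ none :=
                sys_reach_start hqS ⟨c, hcT, rfl⟩ (hbT₀ T _ ⟨c, hcT, rfl⟩)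
              cases hqyv : q (GVert.base c) with
              | none => exact hqyne hqyv
              | some z0 =>
                have := houtJ T _ ⟨c, hcT, rfl⟩ z z0 hA (hqS.1 _ _ hqyv)
                rw [← this] at hqyv
                exact hqy hqyv
            · exact hnoinJ T z y hyY (hqS.1 _ _ hrev)
        · rw [Set.mem_singleton_iff] at hyt
          subst hyt
          exact hbT₀ T y hyY h3
      have hxnY : GVert.base b ∉ (GVert.base : α → GVert α V) '' T := by
        rintro ⟨c, hcT, hc⟩
        exact hbT (by rw [← hbinj hc]; exact hcT)
      obtain ⟨s, hsS⟩ := sum_lemma hT0out hT0in hdeg hqS hqN hp''S hp''N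
        (by rintro z hz
            rw [Set.mem_singleton_iff] at hz
            subst hz
            exact Or.inr h3)
        (by rintro z hz
            rw [Set.mem_singleton_iff] at hz
            subst hz
            exact hxnY)
        (by rintro z hz
            rw [Set.mem_singleton_iff] at hz
            subst hz
            exact hbT₀ {b} _ ⟨b, rfl, rfl⟩)
        (hbT₀ T)
        (by intro u z hz
            rcases hz with hz | hz
            · rw [Set.mem_singleton_iff] at hz
              subst hz
              exact hnoinJ {b} u _ ⟨b, rfl, rfl⟩
            · exact hnoinJ T u z hz)
        (by intro z hz
            rcases hz with hz | hz
            · rw [Set.mem_singleton_iff] at hz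
              subst hz
              exact houtJ {b} _ ⟨b, rfl, rfl⟩
            · exact houtJ T z hz)
      have hset : ({GVert.base b} : Set (GVert α V)) ∪
          ((GVert.base : α → GVert α V) '' T \ {u | ∃ w, p'' w = some u})
          = GVert.base '' (insert b T) := by
        rw [Set.image_insert_eq]
        have hdiff : (GVert.base : α → GVert α V) '' T \ {u | ∃ w, p'' w = some u}
            = GVert.base '' T := by
          ext u
          simp only [Set.mem_diff, Set.mem_setOf_eq, and_iff_left_iff_imp]
          rintro huT ⟨w, hw⟩
          exact hp''Y w u hw huT
        rw [hdiff, Set.singleton_union]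
      rw [hset] at hsS
      have hlink2 : Linked A₀ T₀ ((GVert.base : α → GVert α V) '' (insert b T)) :=
        Sys.linked hsS
      have hins : insert b T ⊆ N.E := Set.insert_subset (hB₀E hbB₀) hTE
      have hind := (pres _ hins).2 hlink2
      have hTeq := hT.eq_of_subset_indep hind (Set.subset_insert b T)
      exact hbT (by rw [hTeq]; exact Set.mem_insert b T)
    exact Sys.linked ⟨hrS.1, hrS.2.1,
      fun z hz => hrS.2.2.1 z (Set.image_mono hIB₀ hz), hterm⟩
  · rintro ⟨hIsub, hlink⟩
    have hIE : I ⊆ N.E := by rw [hE]; exact hIsub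
    obtain ⟨p₀, hp₀S, hp₀N⟩ := Linked.sys ((hEfin.subset hIE).image _) hlink
    have hp₀Y : ∀ y ∈ (GVert.base : α → GVert α V) '' T, p₀ y = none := by
      intro y hy
      cases hpyv : p₀ y with
      | none => rfl
      | some z =>
        exfalso
        rcases hp₀S.1 y z hpyv with ⟨hA, hqy⟩ | hrev
        · obtain ⟨c, hcT, rfl⟩ := hy
          have hqyne : q (GVert.base c) ≠ none :=
            sys_reach_start hqS ⟨c, hcT, rfl⟩ (hbT₀ T _ ⟨c, hcT, rfl⟩)
          cases hqyv : q (GVert.base c) with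
          | none => exact hqyne hqyv
          | some z0 =>
            have := houtJ T _ ⟨c, hcT, rfl⟩ z z0 hA (hqS.1 _ _ hqyv)
            rw [← this] at hqyv
            exact hqy hqyv
        · exact hnoinJ T z y hy (hqS.1 _ _ hrev)
    set X' : Set (GVert α V) := GVert.base '' (I \ T) with hX'def
    have hX'sub : X' ⊆ (GVert.base : α → GVert α V) '' I := Set.image_mono Set.diff_subset
    have hp₀S' : Sys (Res A₀ q) ((GVert.base : α → GVert α V) '' T) X' p₀ :=
      ⟨hp₀S.1, hp₀S.2.1, fun z hz => hp₀S.2.2.1 z (hX'sub hz),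
        fun x hx => hp₀S.2.2.2 x (hX'sub hx)⟩
    have hp₀N' : Norm X' p₀ := by
      refine ⟨?_, hp₀N.2⟩
      intro u hu
      obtain ⟨x, hx, k, hk⟩ := hp₀N.1 u hu
      obtain ⟨a, haI, rfl⟩ := hx
      by_cases haT : a ∈ T
      · exfalso
        have h0 : p₀ (GVert.base a) = none := hp₀Y _ ⟨a, haT, rfl⟩
        rcases Nat.eq_zero_or_pos k with rfl | hkpos
        · have hk' : some (GVert.base a) = some u := hk
          injection hk' with h'
          rw [← h'] at hu
          exact hu h0
        · obtain ⟨m, rfl⟩ : ∃ m, k = m + 1 := ⟨k - 1, by omega⟩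
          have h1' : iterO p₀ 1 (GVert.base a) = none := by
            show (iterO p₀ 0 (GVert.base a)).bind p₀ = none
            show p₀ (GVert.base a) = none
            exact h0
          have := iterO_none_mono (show 1 ≤ m + 1 by omega) h1'
          rw [this] at hk; cases hk
      · exact ⟨GVert.base a, ⟨a, ⟨haI, haT⟩, rfl⟩, k, hk⟩
    obtain ⟨s, hsS⟩ := sum_lemma hT0out hT0in hdeg hqS hqN hp₀S' hp₀N'
      Set.subset_union_left
      (by rintro x ⟨a, haIT, rfl⟩ ⟨c, hcT, hc⟩
          exact haIT.2 (by rw [← hbinj hc]; exact hcT))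
      (hbT₀ _)
      (hbT₀ T)
      (by intro u z hz
          rcases hz with hz | hz
          · exact hnoinJ (I \ T) u z hz
          · exact hnoinJ T u z hz)
      (by intro z hz
          rcases hz with hz | hz
          · exact houtJ (I \ T) z hz
          · exact houtJ T z hz)
    set J : Set α := (I \ T) ∪ {t ∈ T | GVert.base t ∉ {u : GVert α V | ∃ w, p₀ w = some u}}
      with hJdef
    have hJE : J ⊆ N.E := by
      rintro a (ha | ha)
      · exact hIE ha.1
      · exact hTE ha.1
    have himg : (GVert.base : α → GVert α V) '' J
        = X' ∪ ((GVert.base : α → GVert α V) '' T \ {u | ∃ w, p₀ w = some u}) := by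
      rw [hJdef, Set.image_union]
      congr 1
      ext u
      constructor
      · rintro ⟨a, ⟨haT, haR⟩, rfl⟩
        exact ⟨⟨a, haT, rfl⟩, haR⟩
      · rintro ⟨⟨a, haT, rfl⟩, haR⟩
        exact ⟨a, ⟨haT, haR⟩, rfl⟩
    have hsS' : Linked A₀ T₀ ((GVert.base : α → GVert α V) '' J) := by
      rw [himg]
      exact Sys.linked hsS
    have hind := (pres J hJE).2 hsS'
    refine hind.subset ?_
    intro a ha
    by_cases haT : a ∈ T
    · exact Or.inr ⟨haT, fun ⟨w, hw⟩ => hp₀S.2.2.1 (GVert.base a) ⟨a, ha, rfl⟩ w hw⟩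
    · exact Or.inl ⟨ha, haT⟩
end

section
/- Let N be a matroid and let x be an element of the ground set of N that is freely placed in N. Then N is a gammoid if and only if N\x (the deletion of x from N) is a gammoid. -/
/-!
Common definitions: digraphs, linkings, gammoids, minors, isomorphism.
-/

universe u v

open Set

section GammoidHelpers

variable {V : Type*}

lemma linked_mono {A B : V → V → Prop} {T T' X X' : Set V}
    (hAB : ∀ a b, A a b → B a b) (hT : T ⊆ T') (hX : X' ⊆ X)
    (h : Linked A T X) : Linked B T' X' := by
  obtain ⟨P, h1, h2⟩ := h
  refine ⟨P, fun x hx => ?_, fun x hx y hy => h2 x (hX hx) y (hX hy)⟩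
  obtain ⟨ha, hb, hc, t, ht, hd⟩ := h1 x (hX hx)
  exact ⟨ha, hb, hc.imp hAB, t, hT ht, hd⟩

lemma linked_map_some {A : V → V → Prop} {A' : Option V → Option V → Prop}
    {T X : Set V} {T' : Set (Option V)}
    (hA : ∀ a b, A a b → A' (some a) (some b)) (hT : ∀ t ∈ T, some t ∈ T')
    (h : Linked A T X) : Linked A' T' (some '' X) := by
  obtain ⟨P, h1, h2⟩ := h
  refine ⟨fun v => v.elim [] (fun a => (P a).map some), ?_, ?_⟩
  · rintro x' ⟨a, ha, rfl⟩
    obtain ⟨h1a, h1b, h1c, t, ht, h1d⟩ := h1 a ha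
    refine ⟨?_, h1b.map (Option.some_injective V), ?_, some t, hT t ht, ?_⟩
    · simp [List.head?_map, h1a]
    · exact (List.isChain_map some).2 (h1c.imp hA)
    · simp [List.getLast?_map, h1d]
  · rintro x' ⟨a, ha, rfl⟩ y' ⟨b, hb, rfl⟩ hne v hv hv'
    simp only [Option.elim, List.mem_map] at hv hv'
    obtain ⟨w, hw, rfl⟩ := hv
    obtain ⟨w', hw', hww⟩ := hv'
    have hab : a ≠ b := fun h => hne (by rw [h])
    cases hww
    exact h2 a ha b hb hab w hw hw'

lemma none_not_mem_of_chain' {A' : Option V → Option V → Prop}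
    (hA : ∀ u v, A' u v → v ≠ none) :
    ∀ (l : List (Option V)), l.Chain' A' → l.head? ≠ some none → none ∉ l := by
  intro l
  induction l with
  | nil => simp
  | cons a t ih =>
    intro hc hh
    have ha : a ≠ none := fun h => hh (by rw [h]; rfl)
    cases t with
    | nil => simp only [List.mem_singleton]; exact fun h => ha h.symm
    | cons b t' =>
      have hab : A' a b := (List.isChain_cons_cons.1 hc).1
      have hb : b ≠ none := hA _ _ hab
      have := ih (List.isChain_cons_cons.1 hc).2 (by simpa using hb)
      simp only [List.mem_cons] at *
      rintro (h | h)
      · exact ha h.symm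
      · exact this h

lemma eq_map_some_of_none_not_mem :
    ∀ (l : List (Option V)), none ∉ l → ∃ l₀ : List V, l = l₀.map some := by
  intro l
  induction l with
  | nil => exact fun _ => ⟨[], rfl⟩
  | cons a t ih =>
    intro h
    simp only [List.mem_cons, not_or] at h
    obtain ⟨l₀, hl₀⟩ := ih h.2
    cases a with
    | none => exact absurd rfl (fun he => h.1 he.symm)
    | some a0 => exact ⟨a0 :: l₀, by rw [hl₀]; rfl⟩

lemma linked_unmap {A' : Option V → Option V → Prop} {T' X' : Set (Option V)}
    (hA : ∀ u v, A' u v → v ≠ none)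
    (h : Linked A' T' X') :
    Linked (fun a b => A' (some a) (some b)) {t | some t ∈ T'} {a | some a ∈ X'} := by
  obtain ⟨P, h1, h2⟩ := h
  refine ⟨fun a => (P (some a)).filterMap id, ?_, ?_⟩
  · intro a ha
    obtain ⟨h1a, h1b, h1c, t, ht, h1d⟩ := h1 (some a) ha
    have hnone : none ∉ P (some a) :=
      none_not_mem_of_chain' hA _ h1c (by rw [h1a]; simp)
    obtain ⟨l₀, hl₀⟩ := eq_map_some_of_none_not_mem _ hnone
    have hfm : (P (some a)).filterMap id = l₀ := by
      rw [hl₀]; simp [List.filterMap_map]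
    simp only [hfm]
    rw [hl₀] at h1a h1b h1c h1d
    refine ⟨?_, h1b.of_map some, (List.isChain_map some).1 h1c, ?_⟩
    · rw [List.head?_map] at h1a
      cases hh : l₀.head? with
      | none => rw [hh] at h1a; simp at h1a
      | some b => rw [hh] at h1a; simp only [Option.map_some, Option.some.injEq] at h1a; rw [h1a]
    · rw [List.getLast?_map] at h1d
      cases hh : l₀.getLast? with
      | none => rw [hh] at h1d; simp at h1d
      | some b =>
        rw [hh] at h1d
        simp only [Option.map_some] at h1d
        cases h1d
        exact ⟨b, ht, rfl⟩
  · intro a ha b hb hne v hv hv'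
    simp only [List.mem_filterMap, id] at hv hv'
    obtain ⟨w, hw, hwv⟩ := hv
    obtain ⟨w', hw', hwv'⟩ := hv'
    cases w with
    | none => simp at hwv
    | some w0 =>
      simp at hwv; subst hwv
      cases w' with
      | none => simp at hwv'
      | some w0' =>
        simp at hwv'; subst hwv'
        exact h2 (some a) ha (some b) hb (by simpa using hne) _ hw hw'

lemma getLast?_cons_of_getLast?_eq_some {β : Type*} {l : List β} {t : β}
    (h : l.getLast? = some t) (a : β) : (a :: l).getLast? = some t := by
  cases l with
  | nil => simp at h
  | cons b l' => rw [List.getLast?_cons_cons]; exact h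

end GammoidHelpers

section MatroidHelpers

variable {α : Type*} {N : Matroid α} {x : α}

lemma exists_circuit_subset_aux (N : Matroid α) (hfin : N.Finite) :
    ∀ (n : ℕ) (D : Set α), D.ncard ≤ n → N.Dep D → ∃ C, C ⊆ D ∧ IsCircuit N C := by
  intro n
  induction n with
  | zero =>
    intro D hcard hD
    have hDfin : D.Finite := N.set_finite D hD.subset_ground
    have : D = ∅ := by
      rw [← Set.ncard_eq_zero hDfin]; omega
    exact absurd (this ▸ N.empty_indep) hD.not_indep
  | succ n ih =>
    intro D hcard hD
    by_cases h : ∀ C', C' ⊂ D → N.Indep C'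
    · exact ⟨D, subset_rfl, hD.subset_ground, hD.not_indep, h⟩
    · push_neg at h
      obtain ⟨C', hC'sub, hC'⟩ := h
      have hdep : N.Dep C' := ⟨hC', hC'sub.subset.trans hD.subset_ground⟩
      have hDfin : D.Finite := N.set_finite D hD.subset_ground
      have hle : C'.ncard ≤ n := by
        have := Set.ncard_lt_ncard hC'sub hDfin
        omega
      obtain ⟨C, hCs, hC⟩ := ih C' hle hdep
      exact ⟨C, hCs.trans hC'sub.subset, hC⟩

lemma exists_circuit_subset (N : Matroid α) (hfin : N.Finite) {D : Set α} (hD : N.Dep D) :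
    ∃ C, C ⊆ D ∧ IsCircuit N C :=
  exists_circuit_subset_aux N hfin D.ncard D le_rfl hD

lemma spanning_of_mem_closure (hfin : N.Finite)
    (hfree : ∀ C : Set α, IsCircuit N C → x ∈ C → N.Spanning C)
    {J : Set α} (hJ : N.Indep J) (hxJ : x ∉ J) (hxcl : x ∈ N.closure J) :
    N.Spanning J := by
  have hxE : x ∈ N.E := N.closure_subset_ground J hxcl
  have hdep : N.Dep (insert x J) := (hJ.mem_closure_iff.1 hxcl).resolve_right hxJ
  obtain ⟨C, hCs, hC⟩ := exists_circuit_subset N hfin hdep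
  have hxC : x ∈ C := by
    by_contra hxC
    have hCJ : C ⊆ J := fun y hy => ((hCs hy).resolve_left (fun h => hxC (h ▸ hy)))
    exact hC.2.1 (hJ.subset hCJ)
  have hsp : N.Spanning C := hfree C hC hxC
  have hsp' : N.Spanning (insert x J) :=
    hsp.superset hCs (insert_subset hxE hJ.subset_ground)
  rw [Matroid.spanning_iff_closure_eq] at hsp' ⊢
  rwa [Matroid.closure_insert_eq_of_mem_closure hxcl] at hsp'

lemma caseB_iff (hfin : N.Finite)
    (hfree : ∀ C : Set α, IsCircuit N C → x ∈ C → N.Spanning C)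
    (hxcl : x ∈ N.closure (N.E \ {x}))
    {J : Set α} (hJss : J ⊆ N.E \ {x}) (hJ : N.Indep J) :
    N.Indep (insert x J) ↔ ¬ (N.del {x}).Spanning J := by
  have hxE : x ∈ N.E := N.closure_subset_ground _ hxcl
  have hxJ : x ∉ J := fun h => (hJss h).2 rfl
  have hJE : J ⊆ (N.del {x}).E := hJss
  have hMindep : ∀ I : Set α, (N.del {x}).Indep I ↔ N.Indep I ∧ I ⊆ N.E \ {x} :=
    fun I => Matroid.restrict_indep_iff
  constructor
  · intro hind hsp
    have hMJ : (N.del {x}).Indep J := (hMindep J).2 ⟨hJ, hJss⟩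
    have hbase : (N.del {x}).IsBase J := hsp.isBase_of_indep hMJ
    have hsub : N.E \ {x} ⊆ N.closure J := by
      intro y hy
      by_cases hyJ : y ∈ J
      · exact N.subset_closure J hJ.subset_ground hyJ
      · have hni : ¬ N.Indep (insert y J) := by
          intro hi
          have : (N.del {x}).Indep (insert y J) :=
            (hMindep _).2 ⟨hi, insert_subset hy hJss⟩
          exact (hbase.insert_dep ⟨hy, hyJ⟩).not_indep this
        rw [hJ.mem_closure_iff_of_notMem hyJ]
        exact ⟨hni, insert_subset hy.1 hJ.subset_ground⟩
    have hxclJ : x ∈ N.closure J := by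
      have h1 : N.closure (N.E \ {x}) ⊆ N.closure (N.closure J) :=
        N.closure_subset_closure hsub
      rw [Matroid.closure_closure] at h1
      exact h1 hxcl
    have := (hJ.insert_indep_iff_of_notMem hxJ).1 hind
    exact this.2 hxclJ
  · intro hnsp
    rw [hJ.insert_indep_iff_of_notMem hxJ]
    refine ⟨hxE, fun hxclJ => hnsp ?_⟩
    have hNsp : N.Spanning J := spanning_of_mem_closure hfin hfree hJ hxJ hxclJ
    have hNbase : N.IsBase J := hNsp.isBase_of_indep hJ
    have hMJ : (N.del {x}).Indep J := (hMindep J).2 ⟨hJ, hJss⟩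
    have hMbase : (N.del {x}).IsBase J := by
      rw [← Matroid.isBasis_ground_iff, hMJ.isBasis_iff_forall_insert_dep hJE]
      intro y hy
      refine ⟨fun hi => ?_, insert_subset hy.1 hJE⟩
      have h1 : N.Indep (insert y J) := ((hMindep _).1 hi).1
      have hyE : y ∈ N.E \ J := ⟨(((hMindep _).1 hi).2 (mem_insert _ _)).1, hy.2⟩
      exact (hNbase.insert_dep hyE).not_indep h1
    exact hMbase.spanning

end MatroidHelpers

/-- If `x` is freely placed in `N` (every circuit of `N` containing `x` is
spanning), then `N` is a gammoid if and only if `N \ x` is a gammoid. -/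
theorem gammoid_iff_delete_freely_placed {α : Type u} (N : Matroid α)
    (hfin : N.Finite) (x : α) (hx : x ∈ N.E)
    (hfree : ∀ C : Set α, IsCircuit N C → x ∈ C → N.Spanning C) :
    IsGammoid N ↔ IsGammoid (N.del {x}) := by
  classical
  have hME : (N.del {x}).E = N.E \ {x} := rfl
  have hMindep : ∀ I : Set α, (N.del {x}).Indep I ↔ N.Indep I ∧ I ⊆ N.E \ {x} :=
    fun I => Matroid.restrict_indep_iff
  constructor
  · rintro ⟨V, A, T, e, hinj, hiff⟩
    refine ⟨V, A, T, e, hinj.mono (hME ▸ diff_subset), fun I hI => ?_⟩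
    rw [hME] at hI
    rw [hMindep, and_iff_left hI, hiff I (hI.trans diff_subset)]
  · rintro ⟨V, A, T, e, hinj, hiff⟩
    have hiff' : ∀ I, I ⊆ N.E \ {x} → (N.Indep I ↔ Linked A T (e '' I)) := by
      intro I hI
      rw [← hiff I hI, hMindep, and_iff_left hI]
    have hinj' : Set.InjOn e (N.E \ {x}) := hinj
    set e' : α → Option V := fun a => if a = x then none else some (e a) with he'
    have hinj'' : Set.InjOn e' N.E := by
      intro a ha b hb hab
      by_cases hax : a = x <;> by_cases hbx : b = x
      · rw [hax, hbx]
      · simp [he', hax, hbx] at hab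
      · simp [he', hax, hbx] at hab
      · simp only [he', if_neg hax, if_neg hbx, Option.some.injEq] at hab
        exact hinj' ⟨ha, hax⟩ ⟨hb, hbx⟩ hab
    have himage : ∀ J : Set α, x ∉ J → e' '' J = some '' (e '' J) := by
      intro J hxJ
      rw [image_image]
      exact image_congr (fun a haJ => if_neg (fun h : a = x => hxJ (h ▸ haJ)))
    by_cases hxcl : x ∈ N.closure (N.E \ {x})
    · -- x is not a coloop: free-extension construction
      refine ⟨Option V,
        (fun u v => match u, v with
          | some a, some b => A a b
          | none, some b => ∃ s ∈ N.E \ {x}, e s = b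
          | _, none => False), some '' T, e', hinj'', fun I hI => ?_⟩
      set A' : Option V → Option V → Prop :=
        (fun u v => match u, v with
          | some a, some b => A a b
          | none, some b => ∃ s ∈ N.E \ {x}, e s = b
          | _, none => False) with hA'
      have hA'ne : ∀ u v, A' u v → v ≠ none := by
        rintro u v h rfl
        cases u <;> exact h
      have hT'sub : {t | some t ∈ some '' T} ⊆ T := by
        rintro t ⟨t0, ht0, ht⟩
        rwa [← Option.some_injective V ht]
      by_cases hxI : x ∈ I
      · set J := I \ {x} with hJdef
        have hIJ : I = insert x J := by
          rw [hJdef, insert_diff_singleton, insert_eq_of_mem hxI]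
        have hJss : J ⊆ N.E \ {x} := fun a ha => ⟨hI ha.1, ha.2⟩
        have hxJ : x ∉ J := fun h => h.2 rfl
        have hImg : e' '' insert x J = insert none (some '' (e '' J)) := by
          rw [image_insert_eq, himage J hxJ, he']
          simp
        rw [hIJ, hImg]
        constructor
        · intro hind
          have hJind : N.Indep J := hind.subset (subset_insert _ _)
          have hMJ : (N.del {x}).Indep J := (hMindep J).2 ⟨hJind, hJss⟩
          have hnsp : ¬ (N.del {x}).Spanning J :=
            (caseB_iff hfin hfree hxcl hJss hJind).1 hind
          have hnbase : ¬ (N.del {x}).IsBase J := fun h => hnsp h.spanning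
          obtain ⟨B, hB⟩ := (N.del {x}).exists_isBase
          obtain ⟨s, hs, hins⟩ := hMJ.exists_insert_of_not_isBase hnbase hB
          have hsE : s ∈ N.E \ {x} := hB.subset_ground hs.1
          have hsJ : s ∉ J := hs.2
          have hlink : Linked A T (e '' insert s J) :=
            (hiff' _ (insert_subset hsE hJss)).1 ((hMindep _).1 hins).1
          rw [image_insert_eq] at hlink
          obtain ⟨P, hP, hd⟩ := hlink
          have hesJ : e s ∉ e '' J := by
            rintro ⟨y, hy, hey⟩
            exact hsJ ((hinj' hsE (hJss hy) hey.symm) ▸ hy)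
          refine ⟨fun v => match v with
            | none => none :: (P (e s)).map some
            | some w => (P w).map some, ?_, ?_⟩
          · intro y' hy'
            rcases mem_insert_iff.1 hy' with rfl | ⟨w, hw, rfl⟩
            · obtain ⟨hh, hnd, hch, t, ht, hlast⟩ := hP (e s) (mem_insert _ _)
              refine ⟨rfl, ?_, ?_, some t, ⟨t, ht, rfl⟩, ?_⟩
              · exact List.nodup_cons.2 ⟨by simp, hnd.map (Option.some_injective V)⟩
              · refine List.isChain_cons.2 ⟨?_, (List.isChain_map some).2 (hch.imp (fun a b h => h))⟩
                intro z hz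
                rw [List.head?_map, hh] at hz
                rw [Option.mem_def, Option.map_some, Option.some.injEq] at hz
                subst hz
                exact ⟨s, hsE, rfl⟩
              · exact getLast?_cons_of_getLast?_eq_some
                  (by rw [List.getLast?_map, hlast]; rfl) none
            · obtain ⟨hh, hnd, hch, t, ht, hlast⟩ := hP w (mem_insert_of_mem _ hw)
              refine ⟨?_, hnd.map (Option.some_injective V),
                (List.isChain_map some).2 (hch.imp (fun a b h => h)), some t, ⟨t, ht, rfl⟩, ?_⟩
              · rw [List.head?_map, hh]; rfl
              · rw [List.getLast?_map, hlast]; rfl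
          · intro y1 hy1 y2 hy2 hne v hv hv'
            rcases mem_insert_iff.1 hy1 with rfl | ⟨w1, hw1, rfl⟩ <;>
              rcases mem_insert_iff.1 hy2 with h2 | ⟨w2, hw2, h2⟩
            · exact hne h2.symm
            · subst h2
              rcases List.mem_cons.1 hv with rfl | hv0
              · simp only [List.mem_map] at hv'
                obtain ⟨u, _, hu⟩ := hv'
                exact nomatch hu
              · obtain ⟨u, hu, rfl⟩ := List.mem_map.1 hv0
                obtain ⟨u', hu', hu'eq⟩ := List.mem_map.1 hv'
                cases Option.some_injective V hu'eq
                have hne2 : e s ≠ w2 := fun h => hesJ (h ▸ hw2)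
                exact hd (e s) (mem_insert _ _) w2 (mem_insert_of_mem _ hw2) hne2 u hu hu'
            · subst h2
              obtain ⟨u, hu, rfl⟩ := List.mem_map.1 hv
              rcases List.mem_cons.1 hv' with h3 | hv0
              · exact nomatch h3
              · obtain ⟨u', hu', hu'eq⟩ := List.mem_map.1 hv0
                cases Option.some_injective V hu'eq
                have hne2 : w1 ≠ e s := fun h => hesJ (h ▸ hw1)
                exact hd w1 (mem_insert_of_mem _ hw1) (e s) (mem_insert _ _) hne2 u hu hu'
            · subst h2
              obtain ⟨u, hu, rfl⟩ := List.mem_map.1 hv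
              obtain ⟨u', hu', hu'eq⟩ := List.mem_map.1 hv'
              cases Option.some_injective V hu'eq
              have hw12 : w1 ≠ w2 := fun h => hne (by rw [h])
              exact hd w1 (mem_insert_of_mem _ hw1) w2 (mem_insert_of_mem _ hw2) hw12 u hu hu'
        · intro hlink
          have hJlink : Linked A T (e '' J) := by
            refine linked_mono (fun a b h => h) hT'sub ?_ (linked_unmap hA'ne hlink)
            intro a ha
            exact mem_insert_of_mem _ (mem_image_of_mem some ha)
          have hJind : N.Indep J := (hiff' J hJss).2 hJlink
          rw [caseB_iff hfin hfree hxcl hJss hJind]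
          intro hsp
          have hMJ : (N.del {x}).Indep J := (hMindep J).2 ⟨hJind, hJss⟩
          have hMbase : (N.del {x}).IsBase J := hsp.isBase_of_indep hMJ
          obtain ⟨P, hP, hd⟩ := hlink
          obtain ⟨hh, hnd, hch, t', ht', hlast⟩ := hP none (mem_insert _ _)
          obtain ⟨a0, rest, hPn⟩ : ∃ a0 rest, P none = a0 :: rest := by
            cases hPne : P none with
            | nil => rw [hPne] at hh; simp at hh
            | cons a r => exact ⟨a, r, rfl⟩
          have ha0 : a0 = none := by
            rw [hPn] at hh
            simpa using hh
          subst ha0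
          have hrestne : rest ≠ [] := by
            rintro rfl
            rw [hPn] at hlast
            simp only [List.getLast?_singleton, Option.some.injEq] at hlast
            obtain ⟨t0, _, ht0⟩ := ht'
            rw [← hlast] at ht0
            exact nomatch ht0
          obtain ⟨z0, rest', hrest⟩ : ∃ z0 r', rest = z0 :: r' := by
            cases rest with
            | nil => exact absurd rfl hrestne
            | cons a r => exact ⟨a, r, rfl⟩
          have hchain := hch
          rw [hPn, hrest] at hchain
          have hAz : A' none z0 := (List.isChain_cons_cons.1 hchain).1
          obtain ⟨s, hsE, hesz⟩ : ∃ s, s ∈ N.E \ {x} ∧ z0 = some (e s) := by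
            cases z0 with
            | none => exact absurd hAz (by intro h; exact h)
            | some b =>
              obtain ⟨s, hsE, hes⟩ := hAz
              exact ⟨s, hsE, by rw [hes]⟩
          subst hesz
          have hrhead : rest.head? = some (some (e s)) := by rw [hrest]; rfl
          have hsmem : some (e s) ∈ P none := by
            rw [hPn]
            exact List.mem_cons_of_mem _ (by rw [hrest]; exact List.mem_cons_self)
          have hsJ : s ∉ J := by
            intro hsJ
            have hmem : some (e s) ∈ insert none (some '' (e '' J)) :=
              mem_insert_of_mem _ ⟨e s, ⟨s, hsJ, rfl⟩, rfl⟩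
            have h2 : some (e s) ∈ P (some (e s)) :=
              List.mem_of_mem_head? (by rw [(hP (some (e s)) hmem).1]; rfl)
            exact hd none (mem_insert _ _) (some (e s)) hmem (by simp) _ hsmem h2
          have hesX : some (e s) ∉ some '' (e '' J) := by
            rintro ⟨w, ⟨a, haJ, rfl⟩, hw⟩
            have : e s = e a := (Option.some_injective V hw).symm
            exact hsJ ((hinj' hsE (hJss haJ) this) ▸ haJ)
          have hlink3 : Linked A' (some '' T) (insert (some (e s)) (some '' (e '' J))) := by
            refine ⟨fun v => if v = some (e s) then rest else P v, ?_, ?_⟩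
            all_goals simp only []
            · intro y hy
              rcases mem_insert_iff.1 hy with rfl | hy2
              · simp only [if_pos rfl]
                refine ⟨hrhead, ?_, ?_, t', ht', ?_⟩
                · rw [hPn] at hnd; exact hnd.of_cons
                · rw [hPn] at hch; exact (List.isChain_cons.1 hch).2
                · rw [hPn, hrest, List.getLast?_cons_cons] at hlast
                  rw [hrest]
                  exact hlast
              · have hyne : y ≠ some (e s) := fun h => hesX (h ▸ hy2)
                rw [if_neg hyne]
                exact hP y (mem_insert_of_mem _ hy2)
            · intro y1 hy1 y2 hy2 hne v hv hv'
              rcases mem_insert_iff.1 hy1 with rfl | hy1'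
              · simp only [if_pos rfl] at hv
                have hv0 : v ∈ P none := by rw [hPn]; exact List.mem_cons_of_mem _ hv
                rcases mem_insert_iff.1 hy2 with rfl | hy2'
                · exact hne rfl
                · have hy2ne : y2 ≠ some (e s) := fun h => hesX (h ▸ hy2')
                  rw [if_neg hy2ne] at hv'
                  have hny2 : (none : Option V) ≠ y2 := by
                    obtain ⟨w, _, rfl⟩ := hy2'
                    exact fun h => nomatch h
                  exact hd none (mem_insert _ _) y2 (mem_insert_of_mem _ hy2') hny2 v hv0 hv'
              · have hy1ne : y1 ≠ some (e s) := fun h => hesX (h ▸ hy1')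
                rw [if_neg hy1ne] at hv
                rcases mem_insert_iff.1 hy2 with rfl | hy2'
                · simp only [if_pos rfl] at hv'
                  have hv0 : v ∈ P none := by rw [hPn]; exact List.mem_cons_of_mem _ hv'
                  have hny1 : y1 ≠ (none : Option V) := by
                    obtain ⟨w, _, rfl⟩ := hy1'
                    exact fun h => nomatch h
                  exact hd y1 (mem_insert_of_mem _ hy1') none (mem_insert _ _) hny1 v hv hv0
                · have hy2ne : y2 ≠ some (e s) := fun h => hesX (h ▸ hy2')
                  rw [if_neg hy2ne] at hv'
                  exact hd y1 (mem_insert_of_mem _ hy1') y2 (mem_insert_of_mem _ hy2') hne v hv hv'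
          have hlinkV : Linked A T (insert (e s) (e '' J)) := by
            refine linked_mono (fun a b h => h) hT'sub ?_ (linked_unmap hA'ne hlink3)
            intro a ha
            rcases mem_insert_iff.1 ha with rfl | ha'
            · exact mem_insert _ _
            · exact mem_insert_of_mem _ (mem_image_of_mem some ha')
          have hins : (N.del {x}).Indep (insert s J) := by
            refine (hMindep _).2 ⟨?_, insert_subset hsE hJss⟩
            apply (hiff' _ (insert_subset hsE hJss)).2
            rw [image_insert_eq]
            exact hlinkV
          exact (hMbase.insert_dep ⟨hsE, hsJ⟩).not_indep hins
      · have hIss : I ⊆ N.E \ {x} := fun a ha => ⟨hI ha, fun h => hxI (h ▸ ha)⟩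
        rw [himage I hxI, hiff' I hIss]
        constructor
        · exact linked_map_some (fun a b h => h) (fun t ht => ⟨t, ht, rfl⟩)
        · intro h
          refine linked_mono (fun a b h => h) hT'sub ?_ (linked_unmap hA'ne h)
          exact fun a ha => mem_image_of_mem some ha
    · -- x is a coloop: isolated target vertex construction
      refine ⟨Option V,
        (fun u v => match u, v with
          | some a, some b => A a b
          | _, _ => False), insert none (some '' T), e', hinj'', fun I hI => ?_⟩
      set A' : Option V → Option V → Prop :=
        (fun u v => match u, v with
          | some a, some b => A a b
          | _, _ => False) with hA'
      have hA'ne : ∀ u v, A' u v → v ≠ none := by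
        rintro u v h rfl
        cases u <;> exact h
      have hT'sub : {t | some t ∈ insert none (some '' T)} ⊆ T := by
        rintro t ht
        rcases mem_insert_iff.1 ht with h | ⟨t0, ht0, ht1⟩
        · exact nomatch h
        · rwa [← Option.some_injective V ht1]
      have hTup : ∀ t ∈ T, some t ∈ insert none (some '' T) :=
        fun t ht => mem_insert_of_mem _ ⟨t, ht, rfl⟩
      by_cases hxI : x ∈ I
      · set J := I \ {x} with hJdef
        have hIJ : I = insert x J := by
          rw [hJdef, insert_diff_singleton, insert_eq_of_mem hxI]
        have hJss : J ⊆ N.E \ {x} := fun a ha => ⟨hI ha.1, ha.2⟩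
        have hxJ : x ∉ J := fun h => h.2 rfl
        have hImg : e' '' insert x J = insert none (some '' (e '' J)) := by
          rw [image_insert_eq, himage J hxJ, he']
          simp
        rw [hIJ, hImg]
        constructor
        · intro hind
          have hJind : N.Indep J := hind.subset (subset_insert _ _)
          obtain ⟨P, hP, hd⟩ := (hiff' J hJss).1 hJind
          refine ⟨fun v => match v with
            | none => [none]
            | some w => (P w).map some, ?_, ?_⟩
          · intro y' hy'
            rcases mem_insert_iff.1 hy' with rfl | ⟨w, hw, rfl⟩
            · exact ⟨rfl, List.nodup_singleton _, List.isChain_singleton _,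
                none, mem_insert _ _, rfl⟩
            · obtain ⟨hh, hnd, hch, t, ht, hlast⟩ := hP w hw
              refine ⟨?_, hnd.map (Option.some_injective V),
                (List.isChain_map some).2 (hch.imp (fun a b h => h)),
                some t, hTup t ht, ?_⟩
              · rw [List.head?_map, hh]; rfl
              · rw [List.getLast?_map, hlast]; rfl
          · intro y1 hy1 y2 hy2 hne v hv hv'
            rcases mem_insert_iff.1 hy1 with rfl | ⟨w1, hw1, rfl⟩ <;>
              rcases mem_insert_iff.1 hy2 with h2 | ⟨w2, hw2, h2⟩
            · exact hne h2.symm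
            · subst h2
              rcases List.mem_singleton.1 hv with rfl
              simp only [List.mem_map] at hv'
              obtain ⟨u, _, hu⟩ := hv'
              exact nomatch hu
            · subst h2
              obtain ⟨u, hu, rfl⟩ := List.mem_map.1 hv
              rcases List.mem_singleton.1 hv' with h3
              exact nomatch h3
            · subst h2
              obtain ⟨u, hu, rfl⟩ := List.mem_map.1 hv
              obtain ⟨u', hu', hu'eq⟩ := List.mem_map.1 hv'
              cases Option.some_injective V hu'eq
              have hw12 : w1 ≠ w2 := fun h => hne (by rw [h])
              exact hd w1 hw1 w2 hw2 hw12 u hu hu'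
        · intro hlink
          have hJlink : Linked A T (e '' J) := by
            refine linked_mono (fun a b h => h) hT'sub ?_ (linked_unmap hA'ne hlink)
            intro a ha
            exact mem_insert_of_mem _ (mem_image_of_mem some ha)
          have hJind : N.Indep J := (hiff' J hJss).2 hJlink
          rw [hJind.insert_indep_iff_of_notMem hxJ]
          exact ⟨hx, fun h => hxcl (N.closure_subset_closure hJss h)⟩
      · have hIss : I ⊆ N.E \ {x} := fun a ha => ⟨hI ha, fun h => hxI (h ▸ ha)⟩
        rw [himage I hxI, hiff' I hIss]
        constructor
        · exact linked_map_some (fun a b h => h) hTup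
        · intro h
          refine linked_mono (fun a b h => h) hT'sub ?_ (linked_unmap hA'ne h)
          exact fun a ha => mem_image_of_mem some ha
end

section
/- Let N be a matroid and let x be a coloop of N. If N\x (the deletion of x from N) is a gammoid, then N is a gammoid. -/
/-!
Common definitions: digraphs, linkings, gammoids, minors, isomorphism.
-/

universe u v

open Set

namespace GammoidAux

variable {V : Type u}

/-- Lift an arc relation to `Option V`, with `none` isolated. -/
def OA (A : V → V → Prop) : Option V → Option V → Prop
  | some u, some v => A u v
  | _, _ => False

lemma linked_mono {A : V → V → Prop} {T X X' : Set V} (hXX : X' ⊆ X)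
    (h : Linked A T X) : Linked A T X' := by
  obtain ⟨P, h1, h2⟩ := h
  exact ⟨P, fun x hx => h1 x (hXX hx),
    fun x hx y hy hne => h2 x (hXX hx) y (hXX hy) hne⟩

lemma linked_option {A : V → V → Prop} {T X : Set V} (h : Linked A T X) :
    Linked (OA A) (insert none (some '' T)) (insert none (some '' X)) := by
  obtain ⟨P, h1, h2⟩ := h
  refine ⟨fun o => match o with | none => [none] | some v => (P v).map some, ?_, ?_⟩
  · intro x' hx'
    rcases Set.mem_insert_iff.mp hx' with rfl | hx'
    · exact ⟨rfl, by simp, List.isChain_singleton _, none, Or.inl rfl, rfl⟩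
    · obtain ⟨v, hv, rfl⟩ := hx'
      obtain ⟨hh, hn, hc, t, ht, hl⟩ := h1 v hv
      refine ⟨?_, hn.map (Option.some_injective V), ?_, some t, Or.inr ⟨t, ht, rfl⟩, ?_⟩
      · rw [List.head?_map, hh]; rfl
      · exact (List.isChain_map _).mpr (hc.imp fun a b hab => hab)
      · rw [List.getLast?_map, hl]; rfl
  · intro x' hx' y' hy' hne u hu
    rcases Set.mem_insert_iff.mp hx' with rfl | hx' <;>
      rcases Set.mem_insert_iff.mp hy' with h' | hy'
    · exact absurd h'.symm hne
    · obtain ⟨w, hw, rfl⟩ := hy'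
      simp only [List.mem_singleton] at hu
      subst hu
      simp [List.mem_map]
    · obtain ⟨v, hv, rfl⟩ := hx'
      subst h'
      obtain ⟨z, hz, rfl⟩ := List.mem_map.mp hu
      simp
    · obtain ⟨v, hv, rfl⟩ := hx'
      obtain ⟨w, hw, rfl⟩ := hy'
      obtain ⟨z, hz, rfl⟩ := List.mem_map.mp hu
      intro hmem
      obtain ⟨z', hz', hzz⟩ := List.mem_map.mp hmem
      cases Option.some_injective V hzz
      exact h2 v hv w hw (fun hvw => hne (by rw [hvw])) z hz hz'

lemma all_some {A : V → V → Prop} : ∀ (L : List (Option V)), L.Chain' (OA A) →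
    (∀ o, L.head? = some o → o ≠ none) → ∀ o ∈ L, o ≠ none := by
  intro L
  induction L with
  | nil => simp
  | cons a L ih =>
    intro hc hh o ho
    rcases List.mem_cons.mp ho with rfl | ho
    · exact hh o rfl
    · refine ih hc.tail ?_ o ho
      intro b hb heq
      subst heq
      have h := (List.isChain_cons.mp hc).1 none (by simpa using hb)
      cases a <;> exact h

lemma map_filterMap_id {L : List (Option V)} (h : ∀ o ∈ L, o ≠ none) :
    (L.filterMap id).map some = L := by
  induction L with
  | nil => rfl
  | cons a L ih =>
    cases a with
    | none => exact absurd rfl (h none List.mem_cons_self)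
    | some v =>
      simp only [List.filterMap_cons, id, List.map_cons]
      exact congrArg _ (ih (fun o ho => h o (List.mem_cons_of_mem _ ho)))

lemma linked_of_option {A : V → V → Prop} {T X : Set V}
    (h : Linked (OA A) (insert none (some '' T)) (some '' X)) : Linked A T X := by
  obtain ⟨P, h1, h2⟩ := h
  have key : ∀ v ∈ X, ((P (some v)).filterMap id).map some = P (some v) := by
    intro v hv
    obtain ⟨hh, hn, hc, t, ht, hl⟩ := h1 (some v) ⟨v, hv, rfl⟩
    exact map_filterMap_id (all_some _ hc (fun o ho => by
      rw [hh] at ho; cases ho; simp))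
  refine ⟨fun v => (P (some v)).filterMap id, ?_, ?_⟩
  · intro v hv
    obtain ⟨hh, hn, hc, t, ht, hl⟩ := h1 (some v) ⟨v, hv, rfl⟩
    have hk := key v hv
    refine ⟨?_, ?_, ?_, ?_⟩
    · have := List.head?_map (f := some) (l := (P (some v)).filterMap id)
      rw [hk, hh] at this
      cases hme : ((P (some v)).filterMap id).head? with
      | none => rw [hme] at this; simp at this
      | some w => rw [hme] at this; simp at this; rw [this]
    · exact List.Nodup.of_map some (by rw [hk]; exact hn)
    · have hc' : (((P (some v)).filterMap id).map some).Chain' (OA A) := by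
        rw [hk]; exact hc
      exact ((List.isChain_map _).mp hc').imp fun a b hab => hab
    · have := List.getLast?_map (f := some) (l := (P (some v)).filterMap id)
      rw [hk, hl] at this
      rcases Set.mem_insert_iff.mp ht with rfl | ⟨t', ht', rfl⟩
      · cases hme : ((P (some v)).filterMap id).getLast? with
        | none => rw [hme] at this; simp at this
        | some w => rw [hme] at this; simp at this
      · refine ⟨t', ht', ?_⟩
        cases hme : ((P (some v)).filterMap id).getLast? with
        | none => rw [hme] at this; simp at this
        | some w => rw [hme] at this; simp at this; rw [this]
  · intro v hv w hw hne u hu hu'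
    have h1u : some u ∈ P (some v) := by
      rw [← key v hv]; exact List.mem_map_of_mem (f := some) (by simpa using hu)
    have h2u : some u ∈ P (some w) := by
      rw [← key w hw]; exact List.mem_map_of_mem (f := some) (by simpa using hu')
    exact h2 (some v) ⟨v, hv, rfl⟩ (some w) ⟨w, hw, rfl⟩
      (fun hvw => hne (Option.some_injective V hvw)) (some u) h1u h2u

end GammoidAux

/-- If `x` is a coloop of `N` and `N \ x` is a gammoid, then `N` is a gammoid. -/
theorem gammoid_of_delete_coloop {α : Type u} (N : Matroid α) (hfin : N.Finite)
    (x : α) (hx : IsColoop N x) (h : IsGammoid (N.del {x})) : IsGammoid N := by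
  obtain ⟨V, A, T, e, hinj, hiff⟩ := h
  have hE : (N.del {x}).E = N.E \ {x} := rfl
  rw [hE] at hinj hiff
  classical
  refine ⟨Option V, GammoidAux.OA A, insert none (some '' T),
    fun a => if a = x then none else some (e a), ?_, ?_⟩
  · intro a ha b hb hab
    by_cases hax : a = x <;> by_cases hbx : b = x
    · rw [hax, hbx]
    · simp [hax, hbx] at hab
    · simp [hax, hbx] at hab
    · simp only [if_neg hax, if_neg hbx, Option.some_inj] at hab
      exact hinj ⟨ha, hax⟩ ⟨hb, hbx⟩ hab
  · intro I hI
    set e' : α → Option V := fun a => if a = x then none else some (e a) with he'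
    set X : Set V := e '' (I \ {x}) with hX
    have hsub1 : e' '' I ⊆ insert none (some '' X) := by
      rintro _ ⟨a, ha, rfl⟩
      by_cases hax : a = x
      · simp [he', hax]
      · exact Or.inr ⟨e a, ⟨a, ⟨ha, hax⟩, rfl⟩, by simp [he', show ¬ a = x from hax]⟩
    have hsub2 : some '' X ⊆ e' '' I := by
      rintro _ ⟨_, ⟨a, ⟨ha, hax⟩, rfl⟩, rfl⟩
      exact ⟨a, ha, by simp [he', show ¬ a = x from hax]⟩
    have hcol : N.Indep I ↔ N.Indep (I \ {x}) := by
      constructor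
      · exact fun hInd => hInd.subset (Set.diff_subset)
      · intro hInd
        by_cases hxI : x ∈ I
        · obtain ⟨B, hB, hIB⟩ := hInd.exists_isBase_superset
          refine hB.indep.subset ?_
          intro a ha
          by_cases hax : a = x
          · rw [hax]; exact hx.2 B hB
          · exact hIB ⟨ha, hax⟩
        · rwa [Set.diff_singleton_eq_self hxI] at hInd
    have hdel : N.Indep (I \ {x}) ↔ (N.del {x}).Indep (I \ {x}) := by
      rw [Matroid.del, Matroid.restrict_indep_iff]
      refine ⟨fun hh => ⟨hh, ?_⟩, fun hh => hh.1⟩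
      exact fun a ha => ⟨hI ha.1, ha.2⟩
    have hIsub : I \ {x} ⊆ N.E \ {x} := fun a ha => ⟨hI ha.1, ha.2⟩
    rw [hcol, hdel, hiff _ hIsub, ← hX]
    constructor
    · intro hL
      exact GammoidAux.linked_mono hsub1 (GammoidAux.linked_option hL)
    · intro hL
      exact GammoidAux.linked_of_option (GammoidAux.linked_mono hsub2 hL)
end

section
/- Let N be a matroid on ground set S with an element x ∈ S such that x is freely placed in N, x is contained in some circuit of N, and N\x = L(G, S−x, T) for a directed graph G and a basis T of N\x. Let G' be the directed graph obtained from G by adding the new vertex x together with an arc from x to every vertex of T. Then N = L(G', S, T). -/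
/-!
Common definitions: digraphs, linkings, gammoids, minors, isomorphism.
-/

universe u v

open Set

/-! ### Auxiliary lemmas -/

section Aux

variable {W : Type v}

private lemma head?_mem' {l : List W} {a : W} (h : l.head? = some a) : a ∈ l := by
  cases l with
  | nil => simp at h
  | cons b t =>
    simp only [List.head?_cons, Option.some.injEq] at h
    simp [h]

/-- If every arc of `R` has target different from `z`, a chain whose head is not `z`
avoids `z`. -/
private lemma aux_not_mem {R : W → W → Prop} {z : W} (hR : ∀ a b, R a b → b ≠ z) :
    ∀ l : List W, l.Chain' R → (∀ a, l.head? = some a → a ≠ z) → z ∉ l := by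
  intro l
  induction l with
  | nil => simp
  | cons a t ih =>
    intro hc hh
    simp only [List.mem_cons, not_or]
    refine ⟨fun h => hh a rfl h.symm, ih hc.tail ?_⟩
    intro b hb
    cases t with
    | nil => simp at hb
    | cons c t' =>
      simp only [List.head?_cons, Option.some.injEq] at hb
      exact hb ▸ hR a c (List.isChain_cons_cons.mp hc).1

private lemma aux_chain_mono {R Q : W → W → Prop} {z : W}
    (h : ∀ a b, R a b → a ≠ z → Q a b) :
    ∀ l : List W, l.Chain' R → z ∉ l → l.Chain' Q := by
  intro l
  induction l with
  | nil => intro _ _; exact List.isChain_nil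
  | cons a t ih =>
    intro hc hz
    simp only [List.mem_cons, not_or] at hz
    cases t with
    | nil => exact List.isChain_singleton a
    | cons b t' =>
      unfold List.Chain' at hc ⊢
      rw [List.isChain_cons_cons] at hc ⊢
      exact ⟨h a b hc.1 (fun hax => hz.1 hax.symm), ih hc.2 hz.2⟩

private lemma Linked.mono {A A' : W → W → Prop} (h : ∀ a b, A a b → A' a b) {T X : Set W}
    (hL : Linked A T X) : Linked A' T X := by
  obtain ⟨P, h1, h2⟩ := hL
  exact ⟨P, fun x hx => ⟨(h1 x hx).1, (h1 x hx).2.1, (h1 x hx).2.2.1.imp h,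
    (h1 x hx).2.2.2⟩, h2⟩

/-- Paths of an `A`-linkage of a set not containing `z` avoid `z` altogether,
provided no arc of `A` touches `z`. -/
private lemma linked_noz {A : W → W → Prop} {TT X : Set W} {z : W}
    (hzT : z ∉ TT) (hzX : z ∉ X)
    (hAz : ∀ a b, A a b → a ≠ z ∧ b ≠ z) :
    Linked (fun v w => A v w ∨ (v = z ∧ w ∈ TT)) TT X ↔ Linked A TT X := by
  constructor
  · rintro ⟨P, hP, hdisj⟩
    refine ⟨P, fun v hv => ?_, hdisj⟩
    obtain ⟨h1, h2, h3, t', ht'⟩ := hP v hv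
    have hvz : v ≠ z := fun h => hzX (h ▸ hv)
    have hznot : z ∉ P v := by
      refine aux_not_mem ?_ _ h3 ?_
      · rintro a b (hab | ⟨_, hb⟩)
        · exact (hAz a b hab).2
        · exact fun hbz => hzT (hbz ▸ hb)
      · intro a ha
        rw [h1] at ha
        exact (Option.some.inj ha) ▸ hvz
    refine ⟨h1, h2, ?_, t', ht'⟩
    refine aux_chain_mono ?_ _ h3 hznot
    rintro a b (hab | ⟨rfl, _⟩) haz
    · exact hab
    · exact absurd rfl haz
  · exact Linked.mono (fun a b hab => Or.inl hab)

private lemma linked_fwd {A : W → W → Prop} {TT X : Set W} {z τ : W}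
    (hzT : z ∉ TT) (hzX : z ∉ X) (hτT : τ ∈ TT) (hτX : τ ∉ X)
    (hAz : ∀ a b, A a b → a ≠ z ∧ b ≠ z)
    (hL : Linked A TT (insert τ X)) :
    Linked (fun v w => A v w ∨ (v = z ∧ w ∈ TT)) TT (insert z X) := by
  classical
  obtain ⟨P, hP, hdisj⟩ := hL
  have hzτ : z ≠ τ := fun h => hzT (h ▸ hτT)
  have hznot : ∀ v ∈ insert τ X, z ∉ P v := by
    intro v hv
    have hvz : v ≠ z := by
      rintro rfl
      rcases hv with h | h
      · exact hzτ h
      · exact hzX h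
    refine aux_not_mem (fun a b hab => (hAz a b hab).2) _ (hP v hv).2.2.1 ?_
    intro a ha
    rw [(hP v hv).1] at ha
    exact (Option.some.inj ha) ▸ hvz
  refine ⟨fun v => if v = z then [z, τ] else P v, ?_, ?_⟩
  · rintro v (hv | hvX)
    · simp only [if_pos hv]
      refine ⟨by simp [hv], by simp [hzτ], ?_, τ, hτT, rfl⟩
      exact List.isChain_cons_cons.mpr ⟨Or.inr ⟨rfl, hτT⟩, List.isChain_singleton τ⟩
    · have hvz : v ≠ z := fun h => hzX (h ▸ hvX)
      simp only [if_neg hvz]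
      obtain ⟨h1, h2, h3, t', ht'⟩ := hP v (Or.inr hvX)
      exact ⟨h1, h2, h3.imp (fun a b hab => Or.inl hab), t', ht'⟩
  · rintro u hu v hv huv w hw
    have hτmem : τ ∈ P τ := head?_mem' (hP τ (Or.inl rfl)).1
    rcases hu with hu | huX <;> rcases hv with hv | hvX
    · exact absurd (hu.trans hv.symm) huv
    · -- u = z, v ∈ X
      have hvz : v ≠ z := fun h => hzX (h ▸ hvX)
      simp only [if_pos hu] at hw
      simp only [if_neg hvz]
      simp only [List.mem_cons, List.not_mem_nil, or_false] at hw
      rcases hw with hwz | hwτ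
      · rw [hwz]; exact hznot v (Or.inr hvX)
      · rw [hwτ]; exact hdisj τ (Or.inl rfl) v (Or.inr hvX) (fun h => hτX (h ▸ hvX)) τ hτmem
    · -- u ∈ X, v = z
      have huz : u ≠ z := fun h => hzX (h ▸ huX)
      simp only [if_neg huz] at hw
      simp only [if_pos hv]
      intro hmem
      simp only [List.mem_cons, List.not_mem_nil, or_false] at hmem
      rcases hmem with hmz | hmτ
      · rw [hmz] at hw; exact hznot u (Or.inr huX) hw
      · exact hdisj u (Or.inr huX) τ (Or.inl rfl) (fun h => hτX (h ▸ huX)) w hw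
          (by rw [hmτ]; exact hτmem)
    · have huz : u ≠ z := fun h => hzX (h ▸ huX)
      have hvz : v ≠ z := fun h => hzX (h ▸ hvX)
      simp only [if_neg huz] at hw
      simp only [if_neg hvz]
      exact hdisj u (Or.inr huX) v (Or.inr hvX) huv w hw

private lemma linked_bwd {A : W → W → Prop} {TT X : Set W} {z : W}
    (hzT : z ∉ TT) (hzX : z ∉ X)
    (hAz : ∀ a b, A a b → a ≠ z ∧ b ≠ z)
    (hL : Linked (fun v w => A v w ∨ (v = z ∧ w ∈ TT)) TT (insert z X)) :
    ∃ τ ∈ TT, τ ∉ X ∧ Linked A TT (insert τ X) := by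
  classical
  obtain ⟨P, hP, hdisj⟩ := hL
  have hA'target : ∀ a b, (A a b ∨ (a = z ∧ b ∈ TT)) → b ≠ z := by
    rintro a b (hab | ⟨_, hb⟩)
    · exact (hAz a b hab).2
    · exact fun hbz => hzT (hbz ▸ hb)
  have hznot : ∀ v ∈ X, z ∉ P v := by
    intro v hv
    have hvz : v ≠ z := fun h => hzX (h ▸ hv)
    refine aux_not_mem hA'target _ (hP v (Or.inr hv)).2.2.1 ?_
    intro a ha
    rw [(hP v (Or.inr hv)).1] at ha
    exact (Option.some.inj ha) ▸ hvz
  have hchainA : ∀ v ∈ X, (P v).Chain' A := by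
    intro v hv
    refine aux_chain_mono ?_ _ (hP v (Or.inr hv)).2.2.1 (hznot v hv)
    rintro a b (hab | ⟨rfl, _⟩) haz
    · exact hab
    · exact absurd rfl haz
  obtain ⟨h1z, h2z, h3z, tz, htzT, hlz⟩ := hP z (Or.inl rfl)
  match hPz : P z with
  | [] => rw [hPz] at h1z; simp at h1z
  | [a] =>
    rw [hPz] at h1z hlz
    simp only [List.head?_cons, Option.some.injEq] at h1z
    simp only [List.getLast?_singleton, Option.some.injEq] at hlz
    exact absurd (h1z ▸ hlz ▸ htzT) hzT
  | a :: b :: r =>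
    rw [hPz] at h1z h3z
    simp only [List.head?_cons, Option.some.injEq] at h1z
    rw [h1z] at hPz h3z
    have hab := (List.isChain_cons_cons.mp h3z).1
    have hbT : b ∈ TT := by
      rcases hab with h | ⟨_, h⟩
      · exact absurd rfl (hAz _ _ h).1
      · exact h
    have hbz : b ≠ z := fun h => hzT (h ▸ hbT)
    have hbPz : b ∈ P z := by rw [hPz]; simp
    have hbX : b ∉ X := by
      intro hbX
      exact hdisj z (Or.inl rfl) b (Or.inr hbX) (fun h => hbz h.symm) b hbPz
        (head?_mem' (hP b (Or.inr hbX)).1)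
    refine ⟨b, hbT, hbX, fun v => if v = b then [b] else P v, ?_, ?_⟩
    · rintro v (hv | hvX)
      · simp only [if_pos hv]
        exact ⟨by simp [hv], by simp, List.isChain_singleton b, b, hbT, rfl⟩
      · have hvb : v ≠ b := fun h => hbX (h ▸ hvX)
        simp only [if_neg hvb]
        obtain ⟨p1, p2, _, t', ht'⟩ := hP v (Or.inr hvX)
        exact ⟨p1, p2, hchainA v hvX, t', ht'⟩
    · rintro u hu v hv huv w hw
      rcases hu with hu | huX <;> rcases hv with hv | hvX
      · exact absurd (hu.trans hv.symm) huv
      · -- u = b, v ∈ X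
        have hvb : v ≠ b := fun h => hbX (h ▸ hvX)
        simp only [if_pos hu] at hw
        simp only [if_neg hvb]
        simp only [List.mem_cons, List.not_mem_nil, or_false] at hw
        rw [hw]
        have hvz : z ≠ v := fun h => hzX (h ▸ hvX)
        exact hdisj z (Or.inl rfl) v (Or.inr hvX) hvz b hbPz
      · -- u ∈ X, v = b
        have hub : u ≠ b := fun h => hbX (h ▸ huX)
        simp only [if_neg hub] at hw
        simp only [if_pos hv]
        intro hmem
        simp only [List.mem_cons, List.not_mem_nil, or_false] at hmem
        have huz : u ≠ z := fun h => hzX (h ▸ huX)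
        exact hdisj u (Or.inr huX) z (Or.inl rfl) huz w hw (by rw [hmem]; exact hbPz)
      · have hub : u ≠ b := fun h => hbX (h ▸ huX)
        have hvb : v ≠ b := fun h => hbX (h ▸ hvX)
        simp only [if_neg hub] at hw
        simp only [if_neg hvb]
        exact hdisj u (Or.inr huX) v (Or.inr hvX) huv w hw

end Aux

section MatroidAux

variable {α : Type u}

private lemma exists_circuit_sub (N : Matroid α) :
    ∀ n : ℕ, ∀ I : Set α, I.Finite → I.ncard ≤ n → I ⊆ N.E → ¬ N.Indep I →
      ∃ C, C ⊆ I ∧ IsCircuit N C := by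
  intro n
  induction n with
  | zero =>
    intro I hfin hcard hIE hd
    rw [Nat.le_zero, Set.ncard_eq_zero hfin] at hcard
    exact absurd (hcard ▸ N.empty_indep) hd
  | succ n ih =>
    intro I hfin hcard hIE hd
    by_cases h : ∀ C' : Set α, C' ⊂ I → N.Indep C'
    · exact ⟨I, subset_rfl, hIE, hd, h⟩
    · push_neg at h
      obtain ⟨C', hC'I, hC'd⟩ := h
      obtain ⟨C, hCC', hC⟩ := ih C' (hfin.subset hC'I.subset)
        (by
          have := Set.ncard_lt_ncard hC'I hfin
          omega)
        (hC'I.subset.trans hIE) hC'd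
      exact ⟨C, hCC'.trans hC'I.subset, hC⟩

/-- Key matroid lemma: `insert x J` is independent iff `J ∪ {t}` is independent for some
new `t ∈ T`, where `x` is freely placed and `T` is spanning. -/
private lemma key_indep_iff {N : Matroid α} {x : α} {T J : Set α} (hfin : N.Finite)
    (hxE : x ∈ N.E)
    (hfree : ∀ C : Set α, IsCircuit N C → x ∈ C → N.Spanning C)
    (hTcl : N.closure T = N.E) (hTE : T ⊆ N.E \ {x})
    (hJ : J ⊆ N.E \ {x}) :
    N.Indep (insert x J) ↔ ∃ t ∈ T, t ∉ J ∧ N.Indep (insert t J) := by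
  have hxJ' : x ∉ J := fun h => (hJ h).2 rfl
  have hJE : J ⊆ N.E := hJ.trans diff_subset
  constructor
  · intro h
    have hJi : N.Indep J := h.subset (subset_insert _ _)
    have hxcl : x ∉ N.closure J := by
      have := h.notMem_closure_diff_of_mem (mem_insert x J)
      rwa [insert_diff_self_of_notMem hxJ'] at this
    have hnsub : ¬ T ⊆ N.closure J := by
      intro hsub
      refine hxcl ?_
      have hcl : N.closure T ⊆ N.closure J :=
        Matroid.closure_subset_closure_of_subset_closure hsub
      rw [hTcl] at hcl
      exact hcl hxE
    obtain ⟨t, htT, htcl⟩ := not_subset.mp hnsub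
    have htJ : t ∉ J := fun h => htcl (N.subset_closure J hJE h)
    refine ⟨t, htT, htJ, ?_⟩
    rw [hJi.insert_indep_iff_of_notMem htJ]
    exact ⟨(hTE htT).1, htcl⟩
  · rintro ⟨t, htT, htJ, hti⟩
    have hJi : N.Indep J := hti.subset (subset_insert _ _)
    have htcl : t ∉ N.closure J := by
      rw [hJi.insert_indep_iff_of_notMem htJ] at hti
      exact hti.2
    by_contra hdep
    have hIE : insert x J ⊆ N.E := insert_subset hxE hJE
    have hfinI : (insert x J).Finite := hfin.ground_finite.subset hIE
    obtain ⟨C, hCI, hC⟩ := exists_circuit_sub N (insert x J).ncard (insert x J) hfinI le_rfl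
      hIE hdep
    have hxC : x ∈ C := by
      by_contra hxC
      exact hC.2.1 (hJi.subset (fun c hc => ((hCI hc).resolve_left (fun h => hxC (h ▸ hc)))))
    have hCsp := hfree C hC hxC
    have hCxssub : C \ {x} ⊂ C := by
      refine ssubset_of_subset_of_ne diff_subset (fun h => ?_)
      have : x ∈ C \ {x} := h.symm ▸ hxC
      exact this.2 rfl
    have hCxi : N.Indep (C \ {x}) := hC.2.2 _ hCxssub
    have hxclC : x ∈ N.closure (C \ {x}) := by
      rw [hCxi.mem_closure_iff_of_notMem (by simp), insert_diff_singleton,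
        insert_eq_of_mem hxC]
      exact ⟨hC.2.1, hC.1⟩
    have hclCx : N.closure (C \ {x}) = N.E := by
      have h1 : N.closure C = N.E := hCsp.closure_eq
      have h2 : C = insert x (C \ {x}) := by
        rw [insert_diff_singleton, insert_eq_of_mem hxC]
      rw [h2, Matroid.closure_insert_eq_of_mem_closure hxclC] at h1
      exact h1
    have hsub : N.E ⊆ N.closure J := by
      rw [← hclCx]
      refine N.closure_subset_closure (fun c hc => ?_)
      exact (hCI hc.1).resolve_left hc.2
    exact htcl (hsub (hTE htT).1)

end MatroidAux

/-- Let `x` be freely placed in `N`, contained in some circuit, and suppose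
`N \ x = L(G, S - x, T)` for a digraph `G` (on a vertex type `W` into which the
ground type embeds via `ι`, with `ι x` not incident to any arc of `G`) and a
base `T` of `N \ x`. Adding the vertex `x` together with arcs from `x` to every
vertex of `T` produces a digraph `G'` with `N = L(G', S, T)`. -/
theorem freely_placed_extension_linkMatroid {α : Type u} {W : Type v}
    (N : Matroid α) (hfin : N.Finite) (S : Set α) (x : α) (hE : N.E = S)
    (hx : x ∈ S)
    (hfree : ∀ C : Set α, IsCircuit N C → x ∈ C → N.Spanning C)
    (hcirc : ∃ C : Set α, IsCircuit N C ∧ x ∈ C)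
    (ι : α ↪ W) (A : W → W → Prop) (T : Set α)
    (hT : (N.del {x}).IsBase T)
    (hAx : ∀ v w : W, A v w → v ≠ ι x ∧ w ≠ ι x)
    (hG : ∀ I : Set α, (N.del {x}).Indep I ↔ I ⊆ S \ {x} ∧ Linked A (ι '' T) (ι '' I)) :
    ∀ I : Set α, N.Indep I ↔
      I ⊆ S ∧ Linked (fun v w => A v w ∨ (v = ι x ∧ w ∈ ι '' T)) (ι '' T) (ι '' I) := by
  classical
  intro I
  -- basic translations of the deletion
  have hGind : ∀ K : Set α, (N.Indep K ∧ K ⊆ N.E \ {x}) ↔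
      (K ⊆ S \ {x} ∧ Linked A (ι '' T) (ι '' K)) := fun K =>
    Iff.trans (Matroid.restrict_indep_iff (M := N) (R := N.E \ {x}) (I := K)).symm (hG K)
  have hT' : (N.restrict (N.E \ {x})).IsBase T := hT
  have hTb : N.IsBasis T (N.E \ {x}) := (Matroid.isBase_restrict_iff diff_subset).mp hT'
  have hTE : T ⊆ N.E \ {x} := hTb.subset
  have hTclsub : N.E \ {x} ⊆ N.closure T := hTb.subset_closure
  have hxE : x ∈ N.E := by rw [hE]; exact hx
  -- `T` spans all of `N`, using the circuit through `x`
  obtain ⟨C0, hC0, hxC0⟩ := hcirc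
  have hC0ss : C0 \ {x} ⊂ C0 := by
    refine ssubset_of_subset_of_ne diff_subset (fun h => ?_)
    have : x ∈ C0 \ {x} := h.symm ▸ hxC0
    exact this.2 rfl
  have hC0xi : N.Indep (C0 \ {x}) := hC0.2.2 _ hC0ss
  have hxcl0 : x ∈ N.closure (C0 \ {x}) := by
    rw [hC0xi.mem_closure_iff_of_notMem (by simp), insert_diff_singleton,
      insert_eq_of_mem hxC0]
    exact ⟨hC0.2.1, hC0.1⟩
  have hTcl : N.closure T = N.E := by
    refine (N.closure_subset_ground T).antisymm (fun e he => ?_)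
    by_cases hex : e = x
    · rw [hex]
      have h1 : C0 \ {x} ⊆ N.closure T := fun c hc => hTclsub ⟨hC0.1 hc.1, hc.2⟩
      exact Matroid.closure_subset_closure_of_subset_closure h1 hxcl0
    · exact hTclsub ⟨he, hex⟩
  have hzT : ι x ∉ ι '' T := by
    rintro ⟨t, htT, ht⟩
    exact (hTE htT).2 (ι.injective ht)
  by_cases hxI : x ∈ I
  · -- case `x ∈ I`
    have hxJ : x ∉ I \ {x} := fun h => h.2 rfl
    have hIins : insert x (I \ {x}) = I := by
      rw [insert_diff_singleton, insert_eq_of_mem hxI]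
    have hzJ : ι x ∉ ι '' (I \ {x}) := by
      rintro ⟨a, haJ, ha⟩
      exact hxJ (ι.injective ha ▸ haJ)
    have himg : ι '' I = insert (ι x) (ι '' (I \ {x})) := by
      rw [← hIins, image_insert_eq, hIins]
    constructor
    · intro h
      have hIS : I ⊆ S := by rw [← hE]; exact h.subset_ground
      refine ⟨hIS, ?_⟩
      have hJsub : I \ {x} ⊆ N.E \ {x} := fun a ha => ⟨h.subset_ground ha.1, ha.2⟩
      obtain ⟨t, htT, htJ, hti⟩ :=
        (key_indep_iff hfin hxE hfree hTcl hTE hJsub).mp (by rw [hIins]; exact h)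
      have htsub : insert t (I \ {x}) ⊆ N.E \ {x} := insert_subset (hTE htT) hJsub
      have hlinkA : Linked A (ι '' T) (ι '' (insert t (I \ {x}))) :=
        ((hGind _).mp ⟨hti, htsub⟩).2
      rw [image_insert_eq] at hlinkA
      have hτT : ι t ∈ ι '' T := ⟨t, htT, rfl⟩
      have hτJ : ι t ∉ ι '' (I \ {x}) := by
        rintro ⟨a, haJ, ha⟩
        exact htJ (ι.injective ha ▸ haJ)
      rw [himg]
      exact linked_fwd hzT hzJ hτT hτJ hAx hlinkA
    · rintro ⟨hIS, hlink⟩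
      rw [himg] at hlink
      obtain ⟨τ, hτT, hτJ, hlinkA⟩ := linked_bwd hzT hzJ hAx hlink
      obtain ⟨t, htT, rfl⟩ := hτT
      have htJ : t ∉ I \ {x} := fun h => hτJ ⟨t, h, rfl⟩
      have hJsub : I \ {x} ⊆ N.E \ {x} := fun a ha => ⟨by rw [hE]; exact hIS ha.1, ha.2⟩
      have htsub : insert t (I \ {x}) ⊆ S \ {x} := by
        refine insert_subset ?_ (fun a ha => ⟨hIS ha.1, ha.2⟩)
        have := hTE htT
        rw [hE] at this
        exact this
      have hti : N.Indep (insert t (I \ {x})) :=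
        ((hGind _).mpr ⟨htsub, by rw [image_insert_eq]; exact hlinkA⟩).1
      rw [← hIins]
      exact (key_indep_iff hfin hxE hfree hTcl hTE hJsub).mpr ⟨t, htT, htJ, hti⟩
  · -- case `x ∉ I`
    have hzI : ι x ∉ ι '' I := by
      rintro ⟨a, haI, ha⟩
      exact hxI (ι.injective ha ▸ haI)
    constructor
    · intro h
      have hIS : I ⊆ S := by rw [← hE]; exact h.subset_ground
      refine ⟨hIS, ?_⟩
      have hIsub : I ⊆ N.E \ {x} := fun a ha => ⟨h.subset_ground ha, fun he => hxI (he ▸ ha)⟩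
      have hlinkA : Linked A (ι '' T) (ι '' I) := ((hGind I).mp ⟨h, hIsub⟩).2
      exact (linked_noz hzT hzI hAx).mpr hlinkA
    · rintro ⟨hIS, hlink⟩
      have hlinkA : Linked A (ι '' T) (ι '' I) := (linked_noz hzT hzI hAx).mp hlink
      have hIsub : I ⊆ S \ {x} := fun a ha => ⟨hIS ha, fun he => hxI (he ▸ ha)⟩
      exact ((hGind I).mpr ⟨hIsub, hlinkA⟩).1
end
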